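/- arXiv:1310.2800 — 12 statements merged into one kernel-verified Lean document; each statement's English description precedes it below -/
import Mathlib

section
/- Let l ≥ 5 be a prime and F a field such that the l-th cyclotomic polynomial Φ_l(X) is irreducible in F[x]. Then for any nonzero polynomials f(x), g(x) ∈ F[x], the degree of Φ_l(f(x), g(x)) equals (l−1)·max(deg f(x), deg g(x)). -/
open Polynomial

/-- The homogenized cyclotomic polynomial `Φ_l(f,g) = ∑_{j=0}^{l-1} f^j g^{l-1-j}`. -/
noncomputable def PhiH {F : Type*} [Field F] (l : ℕ) (f g : Polynomial F) : Polynomial F :=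
  ∑ j ∈ Finset.range l, f ^ j * g ^ (l - 1 - j)

theorem degree_PhiH {F : Type*} [Field F] (l : ℕ) (hl : l.Prime) (hl5 : 5 ≤ l)
    (hirr : Irreducible (∑ i ∈ Finset.range l, (X : Polynomial F) ^ i))
    (f g : Polynomial F) (hf : f ≠ 0) (hg : g ≠ 0) :
    (PhiH l f g).natDegree = (l - 1) * max f.natDegree g.natDegree := by
  have ha : f.leadingCoeff ≠ 0 := leadingCoeff_ne_zero.mpr hf
  have hb : g.leadingCoeff ≠ 0 := leadingCoeff_ne_zero.mpr hg
  set a := f.leadingCoeff with ha'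
  set b := g.leadingCoeff with hb'
  set df := f.natDegree with hdf
  set dg := g.natDegree with hdg
  set d := max df dg with hd
  set N := (l - 1) * d with hN
  have hterm : ∀ j ∈ Finset.range l,
      (f ^ j * g ^ (l - 1 - j)).natDegree = j * df + (l - 1 - j) * dg := by
    intro j hj
    rw [natDegree_mul (pow_ne_zero _ hf) (pow_ne_zero _ hg), natDegree_pow, natDegree_pow]
  have hle : ∀ j ∈ Finset.range l, (f ^ j * g ^ (l - 1 - j)).natDegree ≤ N := by
    intro j hj
    rw [hterm j hj]
    have hj' : j ≤ l - 1 := Nat.le_sub_one_of_lt (Finset.mem_range.mp hj)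
    calc j * df + (l - 1 - j) * dg ≤ j * d + (l - 1 - j) * d := by
          gcongr
          · exact le_max_left _ _
          · exact le_max_right _ _
      _ = (j + (l - 1 - j)) * d := by ring
      _ = N := by rw [hN]; congr 1; omega
  have hdegle : (PhiH l f g).natDegree ≤ N := by
    apply Polynomial.natDegree_sum_le_of_forall_le
    exact hle
  have hcoeff : (PhiH l f g).coeff N =
      ∑ j ∈ Finset.range l,
        if j * df + (l - 1 - j) * dg = N then a ^ j * b ^ (l - 1 - j) else 0 := by
    rw [PhiH, finset_sum_coeff]
    apply Finset.sum_congr rfl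
    intro j hj
    by_cases h : j * df + (l - 1 - j) * dg = N
    · rw [if_pos h, ← h, ← hterm j hj, coeff_natDegree, leadingCoeff_mul,
        leadingCoeff_pow, leadingCoeff_pow]
    · rw [if_neg h]
      exact coeff_eq_zero_of_natDegree_lt
        (lt_of_le_of_ne (hle j hj) (by rw [hterm j hj]; exact h))
  have hl1 : l - 1 ∈ Finset.range l := by
    simp only [Finset.mem_range]; omega
  have hcne : (PhiH l f g).coeff N ≠ 0 := by
    rw [hcoeff]
    rcases lt_trichotomy df dg with hlt | heq | hgt
    · -- d = dg, only j = 0 contributes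
      have hdeq : d = dg := max_eq_right hlt.le
      rw [Finset.sum_eq_single 0]
      · have : (0 : ℕ) * df + (l - 1 - 0) * dg = N := by
          rw [hN, hdeq]; simp
        rw [if_pos this]
        simpa using pow_ne_zero (l - 1) hb
      · intro j hj hj0
        apply if_neg
        have hjl : j ≤ l - 1 := Nat.le_sub_one_of_lt (Finset.mem_range.mp hj)
        have hj1 : 1 ≤ j := Nat.one_le_iff_ne_zero.mpr hj0
        have h1 : j * df < j * dg := mul_lt_mul_of_pos_left hlt hj1
        have h2 : j * dg + (l - 1 - j) * dg = (l - 1) * dg := by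
          rw [← Nat.add_mul]; congr 1; omega
        have h3 : N = (l - 1) * dg := by rw [hN, hdeq]
        omega
      · intro h; exact absurd (by simp [Finset.mem_range]; omega : (0:ℕ) ∈ Finset.range l) h
    · -- df = dg : all terms contribute
      have hdeq : d = df := by rw [hd, heq, max_self]
      have hall : ∀ j ∈ Finset.range l, j * df + (l - 1 - j) * dg = N := by
        intro j hj
        have hjl : j ≤ l - 1 := Nat.le_sub_one_of_lt (Finset.mem_range.mp hj)
        rw [hN, hdeq, ← heq, ← Nat.add_mul]
        congr 1; omega
      rw [Finset.sum_congr rfl (fun j hj => if_pos (hall j hj))]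
      -- sum = b^(l-1) * Φ.eval (a/b)
      have key : ∑ j ∈ Finset.range l, a ^ j * b ^ (l - 1 - j)
          = b ^ (l - 1) * (∑ i ∈ Finset.range l, (X : Polynomial F) ^ i).eval (a * b⁻¹) := by
        rw [eval_finset_sum, Finset.mul_sum]
        apply Finset.sum_congr rfl
        intro j hj
        have hjl : j ≤ l - 1 := Nat.le_sub_one_of_lt (Finset.mem_range.mp hj)
        have hbj : b ^ (l - 1) = b ^ (l - 1 - j) * b ^ j := by
          rw [← pow_add]; congr 1; omega
        rw [eval_pow, eval_X, mul_pow, inv_pow, hbj]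
        field_simp
      rw [key]
      apply mul_ne_zero (pow_ne_zero _ hb)
      -- Φ has no roots since it is irreducible of degree ≥ 2
      intro hroot
      set Φ := ∑ i ∈ Finset.range l, (X : Polynomial F) ^ i with hΦ
      have hdvd : (X - C (a * b⁻¹)) ∣ Φ := dvd_iff_isRoot.mpr hroot
      obtain ⟨q, hq⟩ := hdvd
      have hΦdeg : l - 1 ≤ Φ.natDegree := by
        apply le_natDegree_of_ne_zero
        rw [hΦ, finset_sum_coeff]
        simp only [coeff_X_pow]
        rw [Finset.sum_ite_eq (Finset.range l) (l - 1) (fun _ => (1 : F))]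
        simp only [hl1, if_pos]
        exact one_ne_zero
      rcases hirr.isUnit_or_isUnit hq with hu | hu
      · exact (Polynomial.not_isUnit_of_natDegree_pos _
          (by rw [natDegree_X_sub_C]; norm_num)) hu
      · have hq0 : q ≠ 0 := hu.ne_zero
        have : Φ.natDegree = 1 := by
          rw [hq, natDegree_mul (X_sub_C_ne_zero _) hq0, natDegree_X_sub_C,
            Polynomial.natDegree_eq_zero_of_isUnit hu]
        omega
    · -- d = df, only j = l - 1 contributes
      have hdeq : d = df := max_eq_left hgt.le
      rw [Finset.sum_eq_single (l - 1)]
      · have : (l - 1) * df + (l - 1 - (l - 1)) * dg = N := by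
          rw [hN, hdeq]; simp
        rw [if_pos this]
        simpa using pow_ne_zero (l - 1) ha
      · intro j hj hj0
        apply if_neg
        have hjl : j < l - 1 := by
          have := Finset.mem_range.mp hj; omega
        have h1 : (l - 1 - j) * dg < (l - 1 - j) * df :=
          mul_lt_mul_of_pos_left hgt (by omega)
        have h2 : j * df + (l - 1 - j) * df = (l - 1) * df := by
          rw [← Nat.add_mul]; congr 1; omega
        have h3 : N = (l - 1) * df := by rw [hN, hdeq]
        omega
      · intro h; exact absurd hl1 h
  exact le_antisymm hdegle (le_natDegree_of_ne_zero hcne)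
end

section
/- Let l ≥ 5 be a prime and F a field such that the l-th cyclotomic polynomial Φ_l(X) is irreducible in F[x]. If f(x), g(x) ∈ F[x] are relatively prime polynomials, then the degree of every irreducible factor of Φ_l(f(x), g(x)) in F[x] is divisible by l−1. -/
open Polynomial

theorem natDegree_factor_PhiH_dvd {F : Type*} [Field F] (l : ℕ) (hl : l.Prime) (hl5 : 5 ≤ l)
    (hirr : Irreducible (∑ i ∈ Finset.range l, (X : Polynomial F) ^ i))
    (f g : Polynomial F) (hfg : IsCoprime f g)
    (h : Polynomial F) (hh : Irreducible h) (hdvd : h ∣ PhiH l f g) :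
    (l - 1) ∣ h.natDegree := by
  haveI : Fact (Irreducible h) := ⟨hh⟩
  have hh0 : h ≠ 0 := hh.ne_zero
  set K := AdjoinRoot h with hK
  set α := AdjoinRoot.root h with hα
  have hl1 : 1 ≤ l := le_trans (by norm_num) hl5
  -- the evaluation of PhiH at the root is zero
  have hev : (aeval α) (PhiH l f g) = 0 := by
    rw [AdjoinRoot.aeval_eq, AdjoinRoot.mk_eq_zero]
    exact hdvd
  set a := aeval α f with ha
  set b := aeval α g with hb
  have hsum : ∑ j ∈ Finset.range l, a ^ j * b ^ (l - 1 - j) = 0 := by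
    have := hev
    simp only [PhiH, map_sum, map_mul, map_pow] at this
    exact this
  obtain ⟨u, v, huv⟩ := hfg
  -- b ≠ 0
  have hb0 : b ≠ 0 := by
    intro hbz
    have hsum' : ∑ j ∈ Finset.range l, a ^ j * b ^ (l - 1 - j) = a ^ (l - 1) := by
      rw [Finset.sum_eq_single (l - 1)]
      · rw [Nat.sub_self, pow_zero, mul_one]
      · intro j hj hne
        have hjl : j < l := Finset.mem_range.mp hj
        have : 0 < l - 1 - j := by omega
        rw [hbz, zero_pow (by omega), mul_zero]
      · intro hmem
        exact absurd (Finset.mem_range.mpr (by omega)) hmem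
    have ha0 : a = 0 := by
      have : a ^ (l - 1) = 0 := by rw [← hsum', hsum]
      exact pow_eq_zero_iff (by omega) |>.mp this
    have h1 : (aeval α) u * a + (aeval α) v * b = 1 := by
      have := congrArg (aeval α) huv
      simpa using this
    rw [ha0, hbz, mul_zero, mul_zero, add_zero] at h1
    exact zero_ne_one h1
  -- ζ = a / b is a root of the cyclotomic polynomial
  set ζ := a * b⁻¹ with hζ
  have hζroot : ∑ i ∈ Finset.range l, ζ ^ i = 0 := by
    have key : (∑ i ∈ Finset.range l, ζ ^ i) * b ^ (l - 1) =
        ∑ j ∈ Finset.range l, a ^ j * b ^ (l - 1 - j) := by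
      rw [Finset.sum_mul]
      apply Finset.sum_congr rfl
      intro i hi
      have hil : i ≤ l - 1 := by have := Finset.mem_range.mp hi; omega
      have hbpow : b ^ (l - 1) = b ^ i * b ^ (l - 1 - i) := by
        rw [← pow_add]; congr 1; omega
      rw [hζ, mul_pow, hbpow, inv_pow]
      field_simp
    have : (∑ i ∈ Finset.range l, ζ ^ i) * b ^ (l - 1) = 0 := by rw [key, hsum]
    rcases mul_eq_zero.mp this with h' | h'
    · exact h'
    · exact absurd (pow_eq_zero_iff (by omega) |>.mp h') hb0
  -- the cyclotomic polynomial is the minimal polynomial of ζ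
  set P : Polynomial F := ∑ i ∈ Finset.range l, (X : Polynomial F) ^ i with hP
  have hPdeg : P.natDegree = l - 1 := by
    have hmul : P * (X - 1) = X ^ l - 1 := geom_sum_mul X l
    have hP0 : P ≠ 0 := hirr.ne_zero
    have hX1 : (X - 1 : Polynomial F) ≠ 0 := X_sub_C_ne_zero 1
    have hd : P.natDegree + (X - 1 : Polynomial F).natDegree = (X ^ l - 1 : Polynomial F).natDegree := by
      rw [← natDegree_mul hP0 hX1, hmul]
    have h1 : (X - 1 : Polynomial F).natDegree = 1 := by
      simpa using natDegree_X_sub_C (1 : F)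
    have h2 : (X ^ l - 1 : Polynomial F).natDegree = l := by
      simpa using natDegree_X_pow_sub_C (n := l) (r := (1 : F))
    omega
  have hPmonic : P.Monic := monic_geom_sum_X (by omega)
  have hζaev : aeval ζ P = 0 := by
    simp only [hP, map_sum, map_pow, aeval_X]
    exact hζroot
  have hmin : minpoly F ζ = P := (minpoly.eq_of_irreducible_of_monic hirr hζaev hPmonic).symm
  haveI : Module.Finite F K := (AdjoinRoot.powerBasis hh0).finite
  have hint : IsIntegral F ζ := IsIntegral.of_finite F ζ
  have hdvd' : (minpoly F ζ).natDegree ∣ Module.finrank F K := minpoly.degree_dvd hint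
  rw [hmin, hPdeg] at hdvd'
  rwa [(AdjoinRoot.powerBasis hh0).finrank, AdjoinRoot.powerBasis_dim] at hdvd'
end

section
/- Let l ≥ 5 be a prime and F a field such that the l-th cyclotomic polynomial Φ_l(X) is irreducible in F[x]. If f(x), g(x) ∈ F[x] are relatively prime polynomials with max(deg f(x), deg g(x)) = 1, then the polynomial Φ_l(f(x), g(x)) is irreducible in F[x]. -/
open Polynomial IntermediateField

theorem irreducible_PhiH_of_degree_one {F : Type*} [Field F] (l : ℕ) (hl : l.Prime) (hl5 : 5 ≤ l)
    (hirr : Irreducible (∑ i ∈ Finset.range l, (X : Polynomial F) ^ i))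
    (f g : Polynomial F) (hfg : IsCoprime f g)
    (hdeg : max f.natDegree g.natDegree = 1) :
    Irreducible (PhiH l f g) := by
  classical
  haveI : Fact l.Prime := ⟨hl⟩
  set Φ : Polynomial F := cyclotomic l F with hΦdef
  have hΦsum : Φ = ∑ i ∈ Finset.range l, (X : Polynomial F) ^ i := cyclotomic_prime F l
  have hΦirr : Irreducible Φ := by rw [hΦsum]; exact hirr
  have hΦmonic : Φ.Monic := cyclotomic.monic l F
  have hΦne : Φ ≠ 0 := hΦmonic.ne_zero
  have hΦdeg : Φ.natDegree = l - 1 := by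
    rw [hΦdef, natDegree_cyclotomic, Nat.totient_prime hl]
  have hf1 : f.natDegree ≤ 1 := le_trans (le_max_left _ _) hdeg.le
  have hg1 : g.natDegree ≤ 1 := le_trans (le_max_right _ _) hdeg.le
  -- PhiH ≠ 0
  have hPhi_ne : PhiH l f g ≠ 0 := by
    intro h0
    have hmul := geom_sum₂_mul f g l
    rw [show (∑ i ∈ Finset.range l, f ^ i * g ^ (l - 1 - i)) = PhiH l f g from rfl,
      h0, zero_mul] at hmul
    have hfl : f ^ l = g ^ l := by
      have := sub_eq_zero.mp hmul.symm
      exact this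
    have hfdvd : f ∣ g ^ l := hfl ▸ dvd_pow_self f hl.ne_zero
    have hgdvd : g ∣ f ^ l := hfl ▸ dvd_pow_self g hl.ne_zero
    have hfu : IsUnit f := (hfg.pow_right).isUnit_of_dvd' (dvd_refl f) hfdvd
    have hgu : IsUnit g := (hfg.symm.pow_right).isUnit_of_dvd' (dvd_refl g) hgdvd
    have hf0 := natDegree_eq_zero_of_isUnit hfu
    have hg0 := natDegree_eq_zero_of_isUnit hgu
    rw [hf0, hg0] at hdeg
    simp at hdeg
  -- degree bound for PhiH
  have hPhideg : (PhiH l f g).natDegree ≤ l - 1 := by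
    apply natDegree_sum_le_of_forall_le
    intro j hj
    have hjl : j < l := Finset.mem_range.mp hj
    refine natDegree_mul_le.trans ?_
    have h1 : (f ^ j).natDegree ≤ j :=
      natDegree_pow_le.trans (by simpa using Nat.mul_le_mul_left j hf1)
    have h2 : (g ^ (l - 1 - j)).natDegree ≤ l - 1 - j :=
      natDegree_pow_le.trans (by simpa using Nat.mul_le_mul_left (l - 1 - j) hg1)
    omega
  -- the field K = F[X]/(Φ)
  haveI := Fact.mk hΦirr
  set K := AdjoinRoot Φ with hK
  set ζ : K := AdjoinRoot.root Φ with hζdef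
  haveI : Module.Finite F K := (AdjoinRoot.powerBasis hΦne).finite
  have hminζ : minpoly F ζ = Φ := by
    rw [hζdef, AdjoinRoot.minpoly_root hΦne, hΦmonic.leadingCoeff, inv_one, map_one, mul_one]
  have hζdeg : (minpoly F ζ).natDegree = l - 1 := by rw [hminζ, hΦdeg]
  set φ := algebraMap F K with hφ
  set a := f.coeff 1
  set b := f.coeff 0
  set c := g.coeff 1
  set d := g.coeff 0
  have hfab : f = C a * X + C b := eq_X_add_C_of_natDegree_le_one hf1
  have hgcd : g = C c * X + C d := eq_X_add_C_of_natDegree_le_one hg1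
  have hdeg_of_coeff : ∀ p : Polynomial F, p.natDegree ≤ 1 → p.coeff 1 = 0 →
      p.natDegree = 0 := by
    intro p hp h1
    by_contra hne
    have hp1 : p.natDegree = 1 := by omega
    have hlc : p.leadingCoeff = 0 := by rw [leadingCoeff, hp1]; exact h1
    have hp0 : p = 0 := leadingCoeff_eq_zero.mp hlc
    rw [hp0, natDegree_zero] at hp1
    exact one_ne_zero hp1.symm
  have hA : φ a - φ c * ζ ≠ 0 := by
    intro h
    by_cases hc : c = 0
    · rw [hc, map_zero, zero_mul, sub_zero] at h
      have ha : a = 0 := by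
        have := (algebraMap F K).injective (show φ a = φ 0 by rw [map_zero]; exact h)
        simpa using this
      have hf0 : f.natDegree = 0 := hdeg_of_coeff f hf1 ha
      have hg0 : g.natDegree = 0 := hdeg_of_coeff g hg1 hc
      rw [hf0, hg0] at hdeg
      simp at hdeg
    · have hζeq : ζ = φ (a / c) := by
        have hcne : φ c ≠ 0 := fun h' =>
          hc ((algebraMap F K).injective (show φ c = φ 0 by rw [map_zero]; exact h'))
        rw [map_div₀, eq_div_iff hcne]
        rw [mul_comm]
        exact (sub_eq_zero.mp h).symm
      have hann : Polynomial.aeval ζ (X - C (a / c)) = 0 := by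
        rw [map_sub, aeval_X, aeval_C, hζeq]
        exact sub_self _
      have hdvd := minpoly.dvd F ζ hann
      have hle : (minpoly F ζ).natDegree ≤ (X - C (a / c)).natDegree :=
        natDegree_le_of_dvd hdvd (X_sub_C_ne_zero _)
      rw [natDegree_X_sub_C, hζdeg] at hle
      omega
  -- the root α of PhiH
  set α : K := (φ a - φ c * ζ)⁻¹ * (φ d * ζ - φ b) with hα
  have key : (φ a - φ c * ζ) * α = φ d * ζ - φ b := by
    rw [hα, mul_inv_cancel_left₀ hA]
  have hfα : Polynomial.aeval α f = ζ * Polynomial.aeval α g := by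
    conv_lhs => rw [hfab]
    conv_rhs => rw [hgcd]
    simp only [map_add, map_mul, aeval_X, aeval_C]
    linear_combination key
  have hgα : Polynomial.aeval α g ≠ 0 := by
    intro h0
    have hfα0 : Polynomial.aeval α f = 0 := by rw [hfα, h0, mul_zero]
    obtain ⟨u, v, huv⟩ := hfg
    have := congrArg (Polynomial.aeval α) huv
    simp only [map_add, map_mul, hfα0, h0, mul_zero, add_zero, map_one] at this
    exact zero_ne_one this
  have hζ0 : ∑ i ∈ Finset.range l, ζ ^ i = 0 := by
    have h2 : Polynomial.aeval ζ (∑ i ∈ Finset.range l, (X : Polynomial F) ^ i) = 0 := by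
      rw [← hΦsum]
      have h3 := minpoly.aeval F ζ
      rwa [hminζ] at h3
    simpa using h2
  have hroot : Polynomial.aeval α (PhiH l f g) = 0 := by
    rw [show PhiH l f g = ∑ j ∈ Finset.range l, f ^ j * g ^ (l - 1 - j) from rfl, map_sum]
    have hterm : ∀ j ∈ Finset.range l, Polynomial.aeval α (f ^ j * g ^ (l - 1 - j)) =
        ζ ^ j * (Polynomial.aeval α g) ^ (l - 1) := by
      intro j hj
      have hjl : j + (l - 1 - j) = l - 1 := by
        have := Finset.mem_range.mp hj; omega
      rw [map_mul, map_pow, map_pow, hfα, mul_pow, mul_assoc, ← pow_add, hjl]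
    rw [Finset.sum_congr rfl hterm, ← Finset.sum_mul, hζ0, zero_mul]
  -- minimal polynomial of α
  have hαint : IsIntegral F α := IsIntegral.of_finite F α
  have hmdvd : minpoly F α ∣ PhiH l f g := minpoly.dvd F α hroot
  have hup : (minpoly F α).natDegree ≤ (PhiH l f g).natDegree :=
    natDegree_le_of_dvd hmdvd hPhi_ne
  -- ζ ∈ F⟮α⟯
  have haev : ∀ p : Polynomial F, Polynomial.aeval α p ∈ F⟮α⟯ := fun p =>
    IntermediateField.algebra_adjoin_le_adjoin F {α}
      (by rw [Algebra.adjoin_singleton_eq_range_aeval]; exact ⟨p, rfl⟩)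
  have hζmem : ζ ∈ F⟮α⟯ := by
    have hζval : ζ = Polynomial.aeval α f * (Polynomial.aeval α g)⁻¹ := by
      rw [hfα, mul_inv_cancel_right₀ hgα]
    rw [hζval]
    exact mul_mem (haev f) (inv_mem (haev g))
  haveI : FiniteDimensional F F⟮α⟯ := IntermediateField.adjoin.finiteDimensional hαint
  have hfr : Module.finrank F F⟮α⟯ = (minpoly F α).natDegree :=
    IntermediateField.adjoin.finrank hαint
  have hmin_eq : minpoly F (⟨ζ, hζmem⟩ : F⟮α⟯) = minpoly F ζ :=
    (minpoly.algebraMap_eq (A := F) (algebraMap F⟮α⟯ K).injective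
      (⟨ζ, hζmem⟩ : F⟮α⟯)).symm
  have hlow : l - 1 ≤ (minpoly F α).natDegree := by
    have := minpoly.natDegree_le (A := F) (⟨ζ, hζmem⟩ : F⟮α⟯)
    rw [hmin_eq, hζdeg, hfr] at this
    exact this
  -- conclude
  obtain ⟨r, hr⟩ := hmdvd
  have hmne : minpoly F α ≠ 0 := minpoly.ne_zero hαint
  have hrne : r ≠ 0 := by
    rintro rfl
    rw [mul_zero] at hr
    exact hPhi_ne hr
  have hdegsum : (PhiH l f g).natDegree = (minpoly F α).natDegree + r.natDegree := by
    rw [hr, natDegree_mul hmne hrne]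
  have hr0 : r.natDegree = 0 := by omega
  have hrunit : IsUnit r := by
    rw [Polynomial.eq_C_of_natDegree_eq_zero hr0]
    exact isUnit_C.mpr (isUnit_iff_ne_zero.mpr (by
      intro h
      apply hrne
      rw [Polynomial.eq_C_of_natDegree_eq_zero hr0, h, map_zero]))
  have hassoc : Associated (minpoly F α) (PhiH l f g) := by
    rw [hr]
    exact (associated_mul_unit_left _ _ hrunit).symm
  exact hassoc.irreducible (minpoly.irreducible hαint)
end

section
/- Let l ≥ 5 be a prime and F a field such that the l-th cyclotomic polynomial Φ_l(X) is irreducible in F[x]. Let f(x), g(x) ∈ F[x] be relatively prime with deg f(x) ≥ 1, and let h(x) be an irreducible factor of Φ_l(f(x), g(x)) in F[x]. Then for every natural number r, h(x) divides f(x)^r − g(x)^r if and only if l divides r. -/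
open Polynomial

attribute [local instance] Ideal.Quotient.field

theorem factor_PhiH_dvd_pow_sub_pow_iff {F : Type*} [Field F] (l : ℕ) (hl : l.Prime)
    (hl5 : 5 ≤ l)
    (hirr : Irreducible (∑ i ∈ Finset.range l, (X : Polynomial F) ^ i))
    (f g : Polynomial F) (hfg : IsCoprime f g) (hf : 1 ≤ f.natDegree)
    (h : Polynomial F) (hh : Irreducible h) (hdvd : h ∣ PhiH l f g) :
    ∀ r : ℕ, h ∣ f ^ r - g ^ r ↔ l ∣ r := by
  -- First: the characteristic of F is not l, i.e. (l : F) ≠ 0.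
  have hlF : (l : F) ≠ 0 := by
    intro h0
    have hdl : ringChar F ∣ l := ringChar.dvd h0
    have hch : ringChar F = l := by
      rcases (Nat.Prime.eq_one_or_self_of_dvd hl _ hdl) with h1 | h1
      · exact absurd h1 (CharP.ringChar_ne_one)
      · exact h1
    haveI : CharP F l := hch ▸ ringChar.charP F
    haveI : Fact l.Prime := ⟨hl⟩
    -- In characteristic l, the geometric sum is (X-1)^(l-1), not irreducible.
    have hx1 : (X - 1 : Polynomial F) ≠ 0 := X_sub_C_ne_zero 1
    have key : (∑ i ∈ Finset.range l, (X : Polynomial F) ^ i) = (X - 1) ^ (l - 1) := by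
      have h1 : (∑ i ∈ Finset.range l, (X : Polynomial F) ^ i) * (X - 1)
          = (X - 1) ^ (l - 1) * (X - 1) := by
        rw [geom_sum_mul, ← pow_succ, Nat.sub_add_cancel hl.one_lt.le]
        rw [sub_pow_char, one_pow]
      exact mul_right_cancel₀ hx1 h1
    rw [key] at hirr
    have hsplit : ((X : Polynomial F) - 1) ^ (l - 1) = (X - 1) * (X - 1) ^ (l - 2) := by
      rw [← pow_succ']
      congr 1
      omega
    rcases hirr.isUnit_or_isUnit hsplit with hu | hu
    · exact (Polynomial.not_isUnit_of_natDegree_pos _ (by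
        simpa using (natDegree_X_sub_C (1 : F)) ▸ Nat.one_pos)) hu
    · refine (Polynomial.not_isUnit_of_natDegree_pos _ ?_) hu
      rw [natDegree_pow]
      have : (X - 1 : Polynomial F).natDegree = 1 := by
        simpa using natDegree_X_sub_C (1 : F)
      rw [this]
      omega
  -- Set up the quotient field K = F[x]/(h).
  haveI hspan : Ideal.IsMaximal (Ideal.span {h}) :=
    PrincipalIdealRing.isMaximal_of_irreducible hh
  set φ := Ideal.Quotient.mk (Ideal.span {h}) with hφ
  have hdvd_iff : ∀ p : Polynomial F, φ p = 0 ↔ h ∣ p := by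
    intro p
    rw [Ideal.Quotient.eq_zero_iff_mem, Ideal.mem_span_singleton]
  -- g is not divisible by h.
  have hPhi0 : φ (PhiH l f g) = 0 := (hdvd_iff _).2 hdvd
  have hPhi : φ (PhiH l f g) = ∑ j ∈ Finset.range l, (φ f) ^ j * (φ g) ^ (l - 1 - j) := by
    simp [PhiH, map_sum, map_mul, map_pow]
  have hnotboth : ¬ (h ∣ f ∧ h ∣ g) := by
    rintro ⟨h1, h2⟩
    exact hh.not_isUnit (hfg.isUnit_of_dvd' h1 h2)
  have hb : φ g ≠ 0 := by
    intro hb0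
    have hgdvd : h ∣ g := (hdvd_iff g).1 hb0
    have : φ (PhiH l f g) = (φ f) ^ (l - 1) := by
      rw [hPhi, hb0]
      rw [Finset.sum_eq_single (l - 1)]
      · rw [Nat.sub_self, pow_zero, mul_one]
      · intro j hj hjne
        rw [Finset.mem_range] at hj
        rw [zero_pow (show l - 1 - j ≠ 0 by omega), mul_zero]
      · intro hc
        exact absurd (Finset.mem_range.2 (by omega)) hc
    rw [hPhi0] at this
    have : φ f = 0 := pow_eq_zero_iff (n := l - 1) (by omega) |>.1 this.symm
    exact hnotboth ⟨(hdvd_iff f).1 this, hgdvd⟩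
  -- u = (f/g) mod h is a primitive l-th root of unity.
  set u := φ f / φ g with hu
  have ha : φ f = u * φ g := by
    rw [hu, div_mul_cancel₀ _ hb]
  have hsum : (∑ i ∈ Finset.range l, u ^ i) = 0 := by
    have h1 : φ (PhiH l f g) = (∑ i ∈ Finset.range l, u ^ i) * (φ g) ^ (l - 1) := by
      rw [hPhi, Finset.sum_mul]
      apply Finset.sum_congr rfl
      intro j hj
      rw [Finset.mem_range] at hj
      rw [ha, mul_pow, mul_assoc, ← pow_add]
      congr 2
      omega
    rw [hPhi0] at h1
    exact (mul_eq_zero.1 h1.symm).resolve_right (pow_ne_zero _ hb)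
  have hul : u ^ l = 1 := by
    have := geom_sum_mul u l
    rw [hsum, zero_mul] at this
    exact sub_eq_zero.1 this.symm
  have hu1 : u ≠ 1 := by
    intro h1
    rw [h1] at hsum
    simp only [one_pow, Finset.sum_const, Finset.card_range, nsmul_eq_mul, mul_one] at hsum
    -- (l : K) = 0 means h ∣ (l : F[x]) = C (l : F), a unit.
    have : φ ((l : ℕ) : Polynomial F) = 0 := by rw [map_natCast]; exact_mod_cast hsum
    have hdl : h ∣ ((l : ℕ) : Polynomial F) := (hdvd_iff _).1 this
    have : IsUnit ((l : ℕ) : Polynomial F) := by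
      rw [← Polynomial.C_eq_natCast]
      exact Polynomial.isUnit_C.2 (isUnit_iff_ne_zero.2 hlF)
    exact hh.not_isUnit (isUnit_of_dvd_unit hdl this)
  have hord : orderOf u = l := by
    have h1 : orderOf u ∣ l := orderOf_dvd_of_pow_eq_one hul
    rcases Nat.Prime.eq_one_or_self_of_dvd hl _ h1 with h2 | h2
    · exact absurd (orderOf_eq_one_iff.1 h2) hu1
    · exact h2
  intro r
  rw [← hdvd_iff, map_sub, map_pow, map_pow, sub_eq_zero, ha, mul_pow]
  constructor
  · intro he
    have : u ^ r = 1 := by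
      have := mul_right_cancel₀ (pow_ne_zero r hb) (he.trans (one_mul ((φ g) ^ r)).symm)
      exact this
    rw [← hord]
    exact orderOf_dvd_of_pow_eq_one this
  · intro hr
    have : u ^ r = 1 := by
      rw [← hord] at hr
      exact orderOf_dvd_iff_pow_eq_one.1 hr
    rw [this, one_mul]
end

section
/- Let l ≥ 5 be a prime and F a field such that the l-th cyclotomic polynomial Φ_l(X) is irreducible in F[x]. If the matrices A₁ = (a₁, b₁; c₁, d₁) and A₂ = (a₂, b₂; c₂, d₂) in GL(2,F) are essentially distinct, then the polynomials Φ_l(a₁x+b₁, c₁x+d₁) and Φ_l(a₂x+b₂, c₂x+d₂) are relatively prime in F[x]. -/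
open Polynomial

/-- Two (invertible) matrices `(a₁,b₁;c₁,d₁)` and `(a₂,b₂;c₂,d₂)` are *essentially distinct*
if there are no `α ∈ F*` and root of unity `μ ∈ F` with
`(a₂,b₂;c₂,d₂) = α·(μa₁,μb₁;c₁,d₁)` or `(a₂,b₂;c₂,d₂) = α·(μc₁,μd₁;a₁,b₁)`. -/
def EssDistinct {F : Type*} [Field F] (a₁ b₁ c₁ d₁ a₂ b₂ c₂ d₂ : F) : Prop :=
  ¬ ∃ (α μ : F) (k : ℕ), α ≠ 0 ∧ 0 < k ∧ μ ^ k = 1 ∧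
      ((a₂ = α * (μ * a₁) ∧ b₂ = α * (μ * b₁) ∧ c₂ = α * c₁ ∧ d₂ = α * d₁) ∨
       (a₂ = α * (μ * c₁) ∧ b₂ = α * (μ * d₁) ∧ c₂ = α * a₁ ∧ d₂ = α * b₁))

lemma phi_coeff {F : Type*} [Field F] (l d : ℕ) (hd : d < l) :
    (∑ i ∈ Finset.range l, (X:F[X])^i).coeff d = 1 := by
  rw [finset_sum_coeff]
  simp [coeff_X_pow, Finset.sum_ite_eq, hd]

lemma phi_natDegree {F : Type*} [Field F] (l : ℕ) (hl : 1 ≤ l) :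
    (∑ i ∈ Finset.range l, (X:F[X])^i).natDegree = l - 1 := by
  apply le_antisymm
  · apply Polynomial.natDegree_sum_le_of_forall_le
    intro i hi
    rw [natDegree_X_pow]
    simp only [Finset.mem_range] at hi; omega
  · exact le_natDegree_of_ne_zero (by rw [phi_coeff l (l-1) (by omega)]; exact one_ne_zero)

lemma phi_monic {F : Type*} [Field F] (l : ℕ) (hl : 1 ≤ l) :
    (∑ i ∈ Finset.range l, (X:F[X])^i).Monic := by
  unfold Polynomial.Monic Polynomial.leadingCoeff
  rw [phi_natDegree l hl, phi_coeff l (l-1) (by omega)]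

lemma char_ne {F : Type*} [Field F] {l : ℕ} (hl5 : 5 ≤ l)
    (hirr : Irreducible (∑ i ∈ Finset.range l, (X : Polynomial F) ^ i)) : (l : F) ≠ 0 := by
  intro h0
  have hroot : IsRoot (∑ i ∈ Finset.range l, (X:F[X])^i) 1 := by
    simp only [IsRoot, eval_finset_sum, eval_pow, eval_X, one_pow, Finset.sum_const,
      Finset.card_range, nsmul_eq_mul, mul_one]
    exact h0
  obtain ⟨w, hw⟩ := dvd_iff_isRoot.mpr hroot
  rcases hirr.isUnit_or_isUnit hw with h | h
  · exact not_isUnit_X_sub_C 1 h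
  · obtain ⟨r, _, hrw⟩ := Polynomial.isUnit_iff.mp h
    have h2 : (∑ i ∈ Finset.range l, (X:F[X])^i).coeff 2 = ((X - C 1) * C r).coeff 2 := by
      rw [hw, hrw]
    rw [phi_coeff l 2 (by omega), coeff_mul_C] at h2
    have hz : (X - C 1 : F[X]).coeff 2 = 0 := by
      simp [coeff_sub, coeff_X, coeff_C, coeff_one]
    rw [hz, zero_mul] at h2
    exact one_ne_zero h2

/-- If `x₀` is a root of `Φ_l(ax+b, cx+d)` in an extension, then the "ratio"
`u = (a x₀ + b)/(c x₀ + d)` satisfies `∑_{j<l} u^j = 0`. -/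
lemma exists_root_ratio {F L : Type*} [Field F] [Field L] [Algebra F L] {l : ℕ} (hl1 : 1 ≤ l)
    {a b c d : F} (hdet : a * d - b * c ≠ 0) {x₀ : L}
    (h0 : (aeval x₀) (PhiH l (C a * X + C b) (C c * X + C d)) = 0) :
    ∃ u : L, (∑ j ∈ Finset.range l, u ^ j = 0) ∧
      u * (algebraMap F L c * x₀ + algebraMap F L d)
        = algebraMap F L a * x₀ + algebraMap F L b := by
  set φ := algebraMap F L with hφ
  have hinj : Function.Injective φ := φ.injective
  set Fp := φ a * x₀ + φ b with hFp
  set G := φ c * x₀ + φ d with hG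
  have hsum : ∑ j ∈ Finset.range l, Fp ^ j * G ^ (l - 1 - j) = 0 := by
    have := h0
    simp only [PhiH, map_sum, map_mul, map_pow, map_add, aeval_X, aeval_C] at this
    exact this
  have hdL : φ (a * d - b * c) ≠ 0 := by
    intro hz
    exact hdet (hinj (by rw [hz, map_zero]))
  have hkey : φ a * G - φ c * Fp = φ (a * d - b * c) := by
    simp only [hFp, hG, map_sub, map_mul]
    ring
  have hGne : G ≠ 0 := by
    intro hG0
    have hF : Fp ≠ 0 := by
      intro hF0
      rw [hG0, hF0, mul_zero, mul_zero, sub_zero] at hkey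
      exact hdL hkey.symm
    have hone : ∑ j ∈ Finset.range l, Fp ^ j * G ^ (l - 1 - j) = Fp ^ (l - 1) := by
      rw [hG0, Finset.sum_eq_single (l - 1)]
      · simp
      · intro j hj hne
        rw [Finset.mem_range] at hj
        rw [zero_pow (by omega : l - 1 - j ≠ 0), mul_zero]
      · intro hmem
        exact absurd (Finset.mem_range.mpr (by omega)) hmem
    exact pow_ne_zero _ hF (by rw [← hone, hsum])
  refine ⟨Fp * G⁻¹, ?_, by field_simp⟩
  have expand : ∀ j ∈ Finset.range l, (Fp * G⁻¹) ^ j * G ^ (l - 1) = Fp ^ j * G ^ (l - 1 - j) := by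
    intro j hj
    rw [Finset.mem_range] at hj
    have hFpj : Fp ^ j = (Fp * G⁻¹) ^ j * G ^ j := by
      rw [mul_pow, mul_assoc, inv_pow, inv_mul_cancel₀ (pow_ne_zero _ hGne), mul_one]
    rw [hFpj, mul_assoc, ← pow_add]
    congr 2
    omega
  have hfac : (∑ j ∈ Finset.range l, (Fp * G⁻¹) ^ j) * G ^ (l - 1) = 0 := by
    rw [Finset.sum_mul, Finset.sum_congr rfl expand, hsum]
  rcases mul_eq_zero.mp hfac with h | h
  · exact h
  · exact absurd h (pow_ne_zero _ hGne)

theorem isCoprime_PhiH_of_essDistinct {F : Type*} [Field F] (l : ℕ) (hl : l.Prime)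
    (hl5 : 5 ≤ l)
    (hirr : Irreducible (∑ i ∈ Finset.range l, (X : Polynomial F) ^ i))
    (a₁ b₁ c₁ d₁ a₂ b₂ c₂ d₂ : F)
    (hdet₁ : a₁ * d₁ - b₁ * c₁ ≠ 0) (hdet₂ : a₂ * d₂ - b₂ * c₂ ≠ 0)
    (hed : EssDistinct a₁ b₁ c₁ d₁ a₂ b₂ c₂ d₂) :
    IsCoprime (PhiH l (C a₁ * X + C b₁) (C c₁ * X + C d₁))
      (PhiH l (C a₂ * X + C b₂) (C c₂ * X + C d₂)) := by
  by_contra hcop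
  set P₁ := PhiH l (C a₁ * X + C b₁) (C c₁ * X + C d₁) with hP₁
  set P₂ := PhiH l (C a₂ * X + C b₂) (C c₂ * X + C d₂) with hP₂
  -- get a common irreducible factor
  obtain ⟨h, hhirr, hh1, hh2⟩ : ∃ h : F[X], Irreducible h ∧ h ∣ P₁ ∧ h ∣ P₂ := by
    classical
    by_cases hg0 : EuclideanDomain.gcd P₁ P₂ = 0
    · obtain ⟨h1, h2⟩ := EuclideanDomain.gcd_eq_zero_iff.mp hg0
      exact ⟨X, irreducible_X, by rw [h1]; exact dvd_zero X, by rw [h2]; exact dvd_zero X⟩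
    · have hgu : ¬IsUnit (EuclideanDomain.gcd P₁ P₂) :=
        fun hu => hcop (EuclideanDomain.gcd_isUnit_iff.mp hu)
      obtain ⟨i, hi, hig⟩ := WfDvdMonoid.exists_irreducible_factor hgu hg0
      exact ⟨i, hi, hig.trans (EuclideanDomain.gcd_dvd_left _ _),
        hig.trans (EuclideanDomain.gcd_dvd_right _ _)⟩
  haveI : Fact (Irreducible h) := ⟨hhirr⟩
  set L := AdjoinRoot h with hL
  set x₀ : L := AdjoinRoot.root h with hx₀
  have e₁ : (aeval x₀) P₁ = 0 := by
    rw [hx₀, AdjoinRoot.aeval_eq, AdjoinRoot.mk_eq_zero]; exact hh1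
  have e₂ : (aeval x₀) P₂ = 0 := by
    rw [hx₀, AdjoinRoot.aeval_eq, AdjoinRoot.mk_eq_zero]; exact hh2
  obtain ⟨u, hsu, hu⟩ := exists_root_ratio (l := l) (by omega) hdet₁ e₁
  obtain ⟨v, hsv, hv⟩ := exists_root_ratio (l := l) (by omega) hdet₂ e₂
  set φ := algebraMap F L with hφ
  have hlL : (l : L) ≠ 0 := by
    intro h0
    apply char_ne hl5 hirr
    apply φ.injective
    rw [map_natCast, map_zero, h0]
  -- u and v are nontrivial l-th roots of unity
  have hul : u ^ l = 1 := by
    have hg := geom_sum_mul u l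
    rw [hsu, zero_mul] at hg
    exact sub_eq_zero.mp hg.symm
  have hvl : v ^ l = 1 := by
    have hg := geom_sum_mul v l
    rw [hsv, zero_mul] at hg
    exact sub_eq_zero.mp hg.symm
  have hu1 : u ≠ 1 := by
    intro h1
    rw [h1] at hsu
    simp only [one_pow, Finset.sum_const, Finset.card_range, nsmul_eq_mul, mul_one] at hsu
    exact hlL hsu
  have hv1 : v ≠ 1 := by
    intro h1
    rw [h1] at hsv
    simp only [one_pow, Finset.sum_const, Finset.card_range, nsmul_eq_mul, mul_one] at hsv
    exact hlL hsv
  have hord : orderOf u = l := by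
    rcases hl.eq_one_or_self_of_dvd _ (orderOf_dvd_of_pow_eq_one hul) with h' | h'
    · exact absurd (orderOf_eq_one_iff.mp h') hu1
    · exact h'
  have hprim : IsPrimitiveRoot u l :=
    ⟨hul, fun m hm => by rw [← hord]; exact orderOf_dvd_of_pow_eq_one hm⟩
  haveI : NeZero l := ⟨by omega⟩
  obtain ⟨t, htl, hvt⟩ := hprim.eq_pow_of_pow_eq_one hvl
  have ht0 : t ≠ 0 := by
    intro h0
    rw [h0, pow_zero] at hvt
    exact hv1 hvt.symm
  -- the fundamental relation between u and v
  have hrel : (φ d₁ * u - φ b₁) * (φ a₂ - φ c₂ * v) = (φ d₂ * v - φ b₂) * (φ a₁ - φ c₁ * u) := by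
    linear_combination (φ a₂ - φ c₂ * v) * hu - (φ a₁ - φ c₁ * u) * hv
  rw [← hvt] at hrel
  set e := (t + 1) % l with he
  have hue : u ^ e = u ^ (t + 1) := by
    conv_rhs => rw [← Nat.div_add_mod (t + 1) l]
    rw [pow_add, pow_mul, hul, one_pow, one_mul, he]
  -- the polynomial relation
  set R : F[X] := C (c₂*d₁ - d₂*c₁) * X ^ e + C (d₂*a₁ - c₂*b₁) * X ^ t
      - C (a₂*d₁ - b₂*c₁) * X ^ 1 - C (b₂*a₁ - a₂*b₁) with hR
  have hRu : (aeval u) R = 0 := by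
    rw [hR]
    simp only [map_sub, map_add, map_mul, map_pow, aeval_C, aeval_X]
    rw [hue]
    linear_combination -hrel
  have hΦu : (aeval u) (∑ i ∈ Finset.range l, (X : Polynomial F) ^ i) = 0 := by
    simp only [map_sum, map_pow, aeval_X]
    exact hsu
  have hmin : (∑ i ∈ Finset.range l, (X : Polynomial F) ^ i) = minpoly F u :=
    minpoly.eq_of_irreducible_of_monic hirr hΦu (phi_monic l (by omega))
  have hΦR : (∑ i ∈ Finset.range l, (X : Polynomial F) ^ i) ∣ R := by
    rw [hmin]; exact minpoly.dvd F u hRu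
  have hel : e < l := Nat.mod_lt _ (by omega)
  -- R must be zero
  have hR0 : R = 0 := by
    by_contra hRne
    obtain ⟨q, hq⟩ := hΦR
    have hq0 : q ≠ 0 := by
      rintro rfl
      rw [mul_zero] at hq
      exact hRne hq
    have hΦ0 : (∑ i ∈ Finset.range l, (X : Polynomial F) ^ i) ≠ 0 :=
      (phi_monic l (by omega)).ne_zero
    have hdegR : R.natDegree ≤ l - 1 := by
      rw [hR]
      refine le_trans (natDegree_sub_le _ _) (max_le (le_trans (natDegree_sub_le _ _)
        (max_le (le_trans (natDegree_add_le _ _) (max_le ?_ ?_)) ?_)) ?_)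
      · exact le_trans (natDegree_C_mul_le _ _) (by rw [natDegree_X_pow]; omega)
      · exact le_trans (natDegree_C_mul_le _ _) (by rw [natDegree_X_pow]; omega)
      · exact le_trans (natDegree_C_mul_le _ _) (by rw [natDegree_X_pow]; omega)
      · rw [natDegree_C]; omega
    have hmul := natDegree_mul hΦ0 hq0
    rw [← hq, phi_natDegree l (by omega)] at hmul
    have hqdeg : q.natDegree = 0 := by omega
    obtain ⟨c, hc⟩ := natDegree_eq_zero.mp hqdeg
    have hc0 : c ≠ 0 := by
      rintro rfl
      rw [map_zero] at hc
      exact hq0 hc.symm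
    have hd : ∃ d, 2 ≤ d ∧ d ≤ 4 ∧ d ≠ e ∧ d ≠ t := by
      by_contra hcon
      push_neg at hcon
      have h2 := hcon 2 (by norm_num) (by norm_num)
      have h3 := hcon 3 (by norm_num) (by norm_num)
      have h4 := hcon 4 (by norm_num) (by norm_num)
      omega
    obtain ⟨d, hd2, hd4, hde, hdt⟩ := hd
    have hcoeffR : R.coeff d = 0 := by
      rw [hR]
      simp only [coeff_sub, coeff_add, coeff_C_mul, coeff_X_pow, coeff_C,
        if_neg hde, if_neg hdt, if_neg (by omega : d ≠ 1), if_neg (by omega : d ≠ 0)]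
      ring
    rw [hq, ← hc, coeff_mul_C, phi_coeff l d (by omega), one_mul] at hcoeffR
    exact hc0 hcoeffR
  -- extract the coefficient relations
  have hcoe : ∀ d : ℕ, (c₂*d₁ - d₂*c₁) * (if d = e then 1 else 0)
      + (d₂*a₁ - c₂*b₁) * (if d = t then 1 else 0)
      - (a₂*d₁ - b₂*c₁) * (if d = 1 then 1 else 0)
      - (if d = 0 then b₂*a₁ - a₂*b₁ else 0) = 0 := by
    intro d
    have hcc := congrArg (fun p : F[X] => p.coeff d) hR0
    simp only [hR, coeff_sub, coeff_add, coeff_C_mul, coeff_X_pow, coeff_C, coeff_zero] at hcc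
    exact hcc
  rcases eq_or_ne t 1 with ht1 | ht1
  · -- v = u : the matrices are proportional
    have he2 : e = 2 := by rw [he, ht1]; exact Nat.mod_eq_of_lt (by omega)
    have hB : b₂*a₁ - a₂*b₁ = 0 := by
      have hc0 := hcoe 0
      rw [if_neg (by omega : (0:ℕ) ≠ e), if_neg (by omega : (0:ℕ) ≠ t),
        if_neg (by norm_num : (0:ℕ) ≠ 1), if_pos rfl] at hc0
      linear_combination -hc0
    have hAD : d₂*a₁ - c₂*b₁ = a₂*d₁ - b₂*c₁ := by
      have hc1 := hcoe 1
      rw [if_neg (by omega : (1:ℕ) ≠ e), if_pos (by omega : (1:ℕ) = t),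
        if_pos rfl, if_neg (by norm_num : (1:ℕ) ≠ 0)] at hc1
      linear_combination hc1
    have hC : c₂*d₁ - d₂*c₁ = 0 := by
      have hc2 := hcoe 2
      rw [if_pos (by omega : (2:ℕ) = e), if_neg (by omega : (2:ℕ) ≠ t),
        if_neg (by norm_num : (2:ℕ) ≠ 1), if_neg (by norm_num : (2:ℕ) ≠ 0)] at hc2
      linear_combination hc2
    have hA0 : a₂*d₁ - b₂*c₁ ≠ 0 := by
      intro h0
      apply mul_ne_zero hdet₁ hdet₂
      linear_combination (d₂*a₁ - c₂*b₁) * h0 - (c₂*d₁ - d₂*c₁) * hB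
    apply hed
    refine ⟨(a₂*d₁ - b₂*c₁) / (a₁*d₁ - b₁*c₁), 1, 1, div_ne_zero hA0 hdet₁, one_pos,
      one_pow 1, Or.inl ⟨?_, ?_, ?_, ?_⟩⟩
    · rw [one_mul, div_mul_eq_mul_div, eq_div_iff hdet₁]
      linear_combination c₁ * hB
    · rw [one_mul, div_mul_eq_mul_div, eq_div_iff hdet₁]
      linear_combination d₁ * hB
    · rw [div_mul_eq_mul_div, eq_div_iff hdet₁]
      linear_combination a₁ * hC + c₁ * hAD
    · rw [div_mul_eq_mul_div, eq_div_iff hdet₁]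
      linear_combination b₁ * hC + d₁ * hAD
  rcases eq_or_ne t (l - 1) with htl1 | htl1
  · -- v = u⁻¹ : the matrices are "swapped"
    have he0 : e = 0 := by
      rw [he, htl1, show l - 1 + 1 = l by omega, Nat.mod_self]
    have hA : a₂*d₁ - b₂*c₁ = 0 := by
      have hc1 := hcoe 1
      rw [if_neg (by omega : (1:ℕ) ≠ e), if_neg (by omega : (1:ℕ) ≠ t),
        if_pos rfl, if_neg (by norm_num : (1:ℕ) ≠ 0)] at hc1
      linear_combination -hc1
    have hD : d₂*a₁ - c₂*b₁ = 0 := by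
      have hct := hcoe t
      rw [if_neg (by omega : t ≠ e), if_pos rfl,
        if_neg (by omega : t ≠ 1), if_neg (by omega : t ≠ 0)] at hct
      linear_combination hct
    have hCB : c₂*d₁ - d₂*c₁ = b₂*a₁ - a₂*b₁ := by
      have hc0 := hcoe 0
      rw [if_pos (by omega : (0:ℕ) = e), if_neg (by omega : (0:ℕ) ≠ t),
        if_neg (by norm_num : (0:ℕ) ≠ 1), if_pos rfl] at hc0
      linear_combination hc0
    have hB0 : b₂*a₁ - a₂*b₁ ≠ 0 := by
      intro h0
      apply mul_ne_zero hdet₁ hdet₂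
      linear_combination (d₂*a₁ - c₂*b₁) * hA - (b₂*a₁ - a₂*b₁) * hCB
        - (b₂*a₁ - a₂*b₁) * h0
    apply hed
    refine ⟨(b₂*a₁ - a₂*b₁) / (a₁*d₁ - b₁*c₁), 1, 1, div_ne_zero hB0 hdet₁, one_pos,
      one_pow 1, Or.inr ⟨?_, ?_, ?_, ?_⟩⟩
    · rw [one_mul, div_mul_eq_mul_div, eq_div_iff hdet₁]
      linear_combination a₁ * hA
    · rw [one_mul, div_mul_eq_mul_div, eq_div_iff hdet₁]
      linear_combination b₁ * hA
    · rw [div_mul_eq_mul_div, eq_div_iff hdet₁]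
      linear_combination c₁ * hD + a₁ * hCB
    · rw [div_mul_eq_mul_div, eq_div_iff hdet₁]
      linear_combination d₁ * hD + b₁ * hCB
  · -- 2 ≤ t ≤ l-2 : impossible
    have ht2 : 2 ≤ t := by omega
    have htl2 : t + 1 < l := by omega
    have het : e = t + 1 := by rw [he]; exact Nat.mod_eq_of_lt htl2
    have hB : b₂*a₁ - a₂*b₁ = 0 := by
      have hc0 := hcoe 0
      rw [if_neg (by omega : (0:ℕ) ≠ e), if_neg (by omega : (0:ℕ) ≠ t),
        if_neg (by norm_num : (0:ℕ) ≠ 1), if_pos rfl] at hc0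
      linear_combination -hc0
    have hA : a₂*d₁ - b₂*c₁ = 0 := by
      have hc1 := hcoe 1
      rw [if_neg (by omega : (1:ℕ) ≠ e), if_neg (by omega : (1:ℕ) ≠ t),
        if_pos rfl, if_neg (by norm_num : (1:ℕ) ≠ 0)] at hc1
      linear_combination -hc1
    have hD : d₂*a₁ - c₂*b₁ = 0 := by
      have hct := hcoe t
      rw [if_neg (by omega : t ≠ e), if_pos rfl,
        if_neg (by omega : t ≠ 1), if_neg (by omega : t ≠ 0)] at hct
      linear_combination hct
    have hC : c₂*d₁ - d₂*c₁ = 0 := by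
      have hce := hcoe e
      rw [if_pos rfl, if_neg (by omega : e ≠ t),
        if_neg (by omega : e ≠ 1), if_neg (by omega : e ≠ 0)] at hce
      linear_combination hce
    apply mul_ne_zero hdet₁ hdet₂
    linear_combination (d₂*a₁ - c₂*b₁) * hA - (b₂*a₁ - a₂*b₁) * hC
end

section
/- Let l ≥ 5 be a prime and F a field such that the l-th cyclotomic polynomial Φ_l(X) is irreducible in F[x]. Assume the standing factorization hypothesis, and assume moreover that the formal derivative f′ ≠ 0 or g′ ≠ 0. Let θ := max(deg f, deg g). Then n ≤ θ and θ·(l² − 4l + 1) ≤ (l−1)²·n − 2l, i.e. n ≤ θ ≤ ((l−1)²n − 2l)/((l−1)² − 2l). -/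
open Polynomial

open UniqueFactorizationMonoid UniqueFactorizationDomain EuclideanDomain

section AllAux


section Aux
variable {F : Type*} [Field F]

theorem cycAux_natDegree {l : ℕ} (hl : 1 ≤ l) (hne : (∑ i ∈ Finset.range l, (X : F[X]) ^ i) ≠ 0) :
    (∑ i ∈ Finset.range l, (X : F[X]) ^ i).natDegree = l - 1 := by
  have h := geom_sum_mul (X : F[X]) l
  have hX1 : ((X : F[X]) - 1) ≠ 0 := by
    have : ((X : F[X]) - 1) = X - C 1 := by simp
    rw [this]
    exact X_sub_C_ne_zero 1
  have h2 := natDegree_mul hne hX1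
  rw [h] at h2
  have h3 : ((X : F[X]) ^ l - 1).natDegree = l := by
    have : ((X : F[X]) ^ l - 1) = X ^ l - C 1 := by simp
    rw [this, natDegree_X_pow_sub_C]
  have h4 : ((X : F[X]) - 1).natDegree = 1 := by
    have : ((X : F[X]) - 1) = X - C 1 := by simp
    rw [this, natDegree_X_sub_C]
  omega

theorem cycAux_no_root {l : ℕ} (hl5 : 5 ≤ l)
    (hirr : Irreducible (∑ i ∈ Finset.range l, (X : F[X]) ^ i)) (x : F) :
    eval x (∑ i ∈ Finset.range l, (X : F[X]) ^ i) ≠ 0 := by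
  intro hx
  obtain ⟨t, ht⟩ : (X - C x) ∣ (∑ i ∈ Finset.range l, (X : F[X]) ^ i) :=
    dvd_iff_isRoot.mpr hx
  rcases hirr.isUnit_or_isUnit ht with h | h
  · exact Polynomial.not_isUnit_X_sub_C x h
  · have ht0 : t ≠ 0 := by
      intro h0
      rw [h0, mul_zero] at ht
      exact hirr.ne_zero ht
    have hd := cycAux_natDegree (F := F) (by omega : 1 ≤ l) hirr.ne_zero
    rw [ht, natDegree_mul (X_sub_C_ne_zero x) ht0, natDegree_X_sub_C,
      natDegree_eq_zero_of_isUnit h] at hd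
    omega

theorem homAux_ne_zero {l : ℕ} (hl5 : 5 ≤ l)
    (hirr : Irreducible (∑ i ∈ Finset.range l, (X : F[X]) ^ i)) {u v : F}
    (huv : ¬(u = 0 ∧ v = 0)) :
    (∑ j ∈ Finset.range l, u ^ j * v ^ (l - 1 - j)) ≠ 0 := by
  by_cases hv : v = 0
  · subst hv
    have hu : u ≠ 0 := fun h => huv ⟨h, rfl⟩
    rw [Finset.sum_eq_single (l - 1)]
    · simpa using pow_ne_zero (l - 1) hu
    · intro j hj hne
      rw [Finset.mem_range] at hj
      rw [zero_pow (by omega : l - 1 - j ≠ 0), mul_zero]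
    · intro h
      exact absurd (Finset.mem_range.mpr (by omega : l - 1 < l)) h
  · have key : (∑ j ∈ Finset.range l, u ^ j * v ^ (l - 1 - j))
        = v ^ (l - 1) * eval (u / v) (∑ i ∈ Finset.range l, (X : F[X]) ^ i) := by
      rw [eval_finset_sum]
      simp only [eval_pow, eval_X]
      rw [Finset.mul_sum]
      refine Finset.sum_congr rfl fun j hj => ?_
      rw [Finset.mem_range] at hj
      rw [_root_.div_pow, pow_sub₀ v hv (by omega : j ≤ l - 1)]
      field_simp
    rw [key]
    exact mul_ne_zero (pow_ne_zero _ hv) (cycAux_no_root hl5 hirr _)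

theorem powAux_inj {l : ℕ} (hl5 : 5 ≤ l)
    (hirr : Irreducible (∑ i ∈ Finset.range l, (X : F[X]) ^ i)) {u v : F}
    (h : u ^ l = v ^ l) : u = v := by
  by_cases hv : v = 0
  · subst hv
    rw [zero_pow (by omega : l ≠ 0)] at h
    exact pow_eq_zero_iff (by omega : l ≠ 0) |>.mp h
  · have hx : (u / v) ^ l = 1 := by
      rw [_root_.div_pow, h, _root_.div_self (pow_ne_zero _ hv)]
    have hg := geom_sum_mul (u / v) l
    rw [hx, sub_self] at hg
    rcases mul_eq_zero.mp hg with h1 | h2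
    · exfalso
      apply cycAux_no_root hl5 hirr (u / v)
      simpa [eval_finset_sum] using h1
    · have h3 : u / v = 1 := sub_eq_zero.mp h2
      field_simp at h3
      exact h3

end Aux


section Aux2
variable {F : Type*} [Field F]

theorem PhiH_coeff_top {l : ℕ} {p q : F[X]} {m : ℕ}
    (hp : p.natDegree ≤ m) (hq : q.natDegree ≤ m) :
    (PhiH l p q).coeff ((l - 1) * m)
      = ∑ j ∈ Finset.range l, (p.coeff m) ^ j * (q.coeff m) ^ (l - 1 - j) := by
  rw [PhiH, finset_sum_coeff]
  refine Finset.sum_congr rfl fun j hj => ?_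
  rw [Finset.mem_range] at hj
  have e : (l - 1) * m = j * m + (l - 1 - j) * m := by
    rw [← Nat.add_mul]
    congr 1
    omega
  rw [e, coeff_mul_add_eq_of_natDegree_le (natDegree_pow_le_of_le j hp)
    (natDegree_pow_le_of_le (l - 1 - j) hq),
    coeff_pow_of_natDegree_le hp, coeff_pow_of_natDegree_le hq]

theorem PhiH_natDegree_le {l : ℕ} {p q : F[X]} {m : ℕ}
    (hp : p.natDegree ≤ m) (hq : q.natDegree ≤ m) :
    (PhiH l p q).natDegree ≤ (l - 1) * m := by
  rw [PhiH]
  refine natDegree_sum_le_of_forall_le _ _ fun j hj => ?_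
  rw [Finset.mem_range] at hj
  refine natDegree_mul_le.trans ?_
  have h1 := natDegree_pow_le_of_le (p := p) j hp
  have h2 := natDegree_pow_le_of_le (p := q) (l - 1 - j) hq
  have : j * m + (l - 1 - j) * m = (j + (l - 1 - j)) * m := by rw [Nat.add_mul]
  have e : j + (l - 1 - j) ≤ l - 1 := by omega
  calc (p ^ j).natDegree + (q ^ (l - 1 - j)).natDegree ≤ j * m + (l - 1 - j) * m := by omega
    _ ≤ (l - 1) * m := by rw [this]; exact Nat.mul_le_mul_right m e

theorem PhiH_natDegree_eq {l : ℕ} (hl5 : 5 ≤ l)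
    (hirr : Irreducible (∑ i ∈ Finset.range l, (X : F[X]) ^ i))
    {p q : F[X]} {m : ℕ} (hp : p.natDegree ≤ m) (hq : q.natDegree ≤ m)
    (h0 : ¬(p.coeff m = 0 ∧ q.coeff m = 0)) :
    (PhiH l p q).natDegree = (l - 1) * m ∧ PhiH l p q ≠ 0 := by
  have hc := PhiH_coeff_top (l := l) hp hq
  have hne : (PhiH l p q).coeff ((l - 1) * m) ≠ 0 := by
    rw [hc]; exact homAux_ne_zero hl5 hirr h0
  exact ⟨le_antisymm (PhiH_natDegree_le hp hq) (le_natDegree_of_ne_zero hne),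
    fun h => hne (by rw [h, coeff_zero])⟩

end Aux2

section RadAux

theorem radicalAux_mul_dvd {M : Type*} [CommMonoidWithZero M] [IsCancelMulZero M] [NormalizationMonoid M]
    [UniqueFactorizationMonoid M] {a b : M} (ha : a ≠ 0) (hb : b ≠ 0) :
    radical (a * b) ∣ radical a * radical b := by
  classical
  unfold radical primeFactors
  rw [normalizedFactors_mul ha hb, Multiset.toFinset_add]
  set s := (normalizedFactors a).toFinset
  set t := (normalizedFactors b).toFinset
  rw [← Finset.union_sdiff_self_eq_union, Finset.prod_union Finset.sdiff_disjoint.symm]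
  exact mul_dvd_mul dvd_rfl (Finset.prod_dvd_prod_of_subset _ _ _ (Finset.sdiff_subset))

theorem radicalAux_prod_dvd {M ι : Type*} [CommMonoidWithZero M] [IsCancelMulZero M] [NormalizationMonoid M]
    [UniqueFactorizationMonoid M] [Nontrivial M] (s : Finset ι) (f : ι → M) (h : ∀ i ∈ s, f i ≠ 0) :
    radical (∏ i ∈ s, f i) ∣ ∏ i ∈ s, radical (f i) := by
  classical
  induction s using Finset.induction_on with
  | empty => simp
  | insert i s hnotmem ih =>
    rw [Finset.prod_insert hnotmem, Finset.prod_insert hnotmem]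
    have h1 : f i ≠ 0 := h i (Finset.mem_insert_self i s)
    have h2 : (∏ j ∈ s, f j) ≠ 0 :=
      Finset.prod_ne_zero_iff.mpr fun j hj => h j (Finset.mem_insert_of_mem hj)
    exact (radicalAux_mul_dvd h1 h2).trans
      (mul_dvd_mul dvd_rfl (ih fun j hj => h j (Finset.mem_insert_of_mem hj)))

end RadAux



theorem abcAux_refined {k : Type*} [Field k] [DecidableEq k] {a b c : k[X]}
    (hc : c ≠ 0) (hab : IsCoprime a b) (hbc : IsCoprime b c) (hca : IsCoprime c a)
    (hsum : a + b + c = 0) (hw : wronskian a b ≠ 0) (hd : a.natDegree = b.natDegree) :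
    c.natDegree + 2 ≤ (radical (a * b * c)).natDegree := by
  have ha : a ≠ 0 := fun h => hw (by simp [h])
  have hb : b ≠ 0 := fun h => hw (by simp [h])
  set m := b.natDegree with hm
  have hm1 : 1 ≤ m := by
    by_contra h
    push_neg at h
    have hb0 : b.natDegree = 0 := by omega
    have ha0 : a.natDegree = 0 := by omega
    obtain ⟨x, hx⟩ := natDegree_eq_zero.mp ha0
    obtain ⟨y, hy⟩ := natDegree_eq_zero.mp hb0
    apply hw
    rw [wronskian, ← hx, ← hy, derivative_C, derivative_C]
    ring
  -- improved Wronskian degree bound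
  have hw2 : (wronskian a b).natDegree + 2 ≤ 2 * m := by
    have hda : (derivative a).natDegree ≤ m - 1 := by
      have := natDegree_derivative_le a; omega
    have hdb : (derivative b).natDegree ≤ m - 1 := by
      have := natDegree_derivative_le b; omega
    have hcoeff : (wronskian a b).coeff (2 * m - 1) = 0 := by
      have e1 : 2 * m - 1 = m + (m - 1) := by omega
      have e2 : 2 * m - 1 = (m - 1) + m := by omega
      have em : m - 1 + 1 = m := by omega
      rw [wronskian, coeff_sub]
      rw [show (a * derivative b).coeff (2 * m - 1)
          = (a * derivative b).coeff (m + (m - 1)) by rw [← e1]]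
      rw [show (derivative a * b).coeff (2 * m - 1)
          = (derivative a * b).coeff ((m - 1) + m) by rw [← e2]]
      rw [coeff_mul_add_eq_of_natDegree_le (le_of_eq hd) hdb,
        coeff_mul_add_eq_of_natDegree_le hda (le_refl m),
        coeff_derivative, coeff_derivative, em]
      ring
    have hle : (wronskian a b).natDegree ≤ 2 * m - 1 := by
      rw [wronskian]
      refine (natDegree_sub_le _ _).trans (max_le ?_ ?_)
      · refine natDegree_mul_le.trans ?_
        have := hd.le
        omega
      · refine natDegree_mul_le.trans ?_
        omega
    have hne : (wronskian a b).natDegree ≠ 2 * m - 1 := by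
      intro h
      apply hw
      apply leadingCoeff_eq_zero.mp
      rw [leadingCoeff, h]
      exact hcoeff
    omega
  -- divRadical divides the Wronskian
  have abc_dr_dvd_w : divRadical (a * b * c) ∣ wronskian a b := by
    have wbc : wronskian a b = wronskian b c := wronskian_eq_of_sum_zero hsum
    have adr := divRadical_dvd_wronskian_left a b
    have bdr := divRadical_dvd_wronskian_right a b
    have cdr := divRadical_dvd_wronskian_right b c
    rw [← wbc] at cdr
    rw [divRadical_mul (hca.symm.mul_left hbc), divRadical_mul hab]
    exact (hca.divRadical.symm.mul_left hbc.divRadical).mul_dvd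
      (hab.divRadical.mul_dvd adr bdr) cdr
  have habc : a * b * c ≠ 0 := mul_ne_zero (mul_ne_zero ha hb) hc
  have h1 : (divRadical (a * b * c)).natDegree ≤ (wronskian a b).natDegree :=
    natDegree_le_of_dvd abc_dr_dvd_w hw
  have h2 : (a * b * c).natDegree
      = (divRadical (a * b * c)).natDegree + (radical (a * b * c)).natDegree := by
    conv_lhs => rw [← radical_mul_divRadical (a := a * b * c)]
    rw [natDegree_mul (radical_ne_zero (a := a * b * c)) (divRadical_ne_zero habc)]
    omega
  have h3 : (a * b * c).natDegree = m + m + c.natDegree := by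
    rw [natDegree_mul (mul_ne_zero ha hb) hc, natDegree_mul ha hb, hd]
  omega


end AllAux

theorem stmt7 {F : Type*} [Field F] (l : ℕ) (hl : l.Prime) (hl5 : 5 ≤ l)
    (hirr : Irreducible (∑ i ∈ Finset.range l, (X : Polynomial F) ^ i))
    (f g : Polynomial F) (hfg : IsCoprime f g)
    (hθ : 1 ≤ max f.natDegree g.natDegree)
    (α : F) (hα : α ≠ 0) (Ψ : Polynomial F) (hΨ : Ψ ≠ 0)
    (n : ℕ) (hn1 : 1 ≤ n)
    (a b c d : Fin n → F) (hdet : ∀ i, a i * d i - b i * c i ≠ 0)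
    (hed : ∀ i j, i ≠ j →
      EssDistinct (a i) (b i) (c i) (d i) (a j) (b j) (c j) (d j))
    (r : Fin n → ℕ) (hr : ∀ i, 1 ≤ r i)
    (heq : PhiH l f g = C α * Ψ ^ l *
      ∏ i, (PhiH l (C (a i) * X + C (b i)) (C (c i) * X + C (d i))) ^ r i)
    (hder : derivative f ≠ 0 ∨ derivative g ≠ 0) :
    n ≤ max f.natDegree g.natDegree ∧
      (max f.natDegree g.natDegree : ℤ) * ((l : ℤ) ^ 2 - 4 * l + 1) ≤
        ((l : ℤ) - 1) ^ 2 * n - 2 * l := by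
  classical
  -- f and g are nonzero
  have hf0 : f ≠ 0 := by
    intro h
    rw [h] at hfg
    have hg1 := isCoprime_zero_left.mp hfg
    have h2 := natDegree_eq_zero_of_isUnit hg1
    rw [h, natDegree_zero, h2] at hθ
    simp at hθ
  have hg0 : g ≠ 0 := by
    intro h
    rw [h] at hfg
    have hg1 := isCoprime_zero_right.mp hfg
    have h2 := natDegree_eq_zero_of_isUnit hg1
    rw [h, natDegree_zero, h2] at hθ
    simp at hθ
  set θ := max f.natDegree g.natDegree with hθdef
  have hdf : f.natDegree ≤ θ := le_max_left _ _
  have hdg : g.natDegree ≤ θ := le_max_right _ _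
  -- top coefficients not both zero
  have huv : ¬(f.coeff θ = 0 ∧ g.coeff θ = 0) := by
    rintro ⟨hu, hv⟩
    rcases max_choice f.natDegree g.natDegree with h | h
    · rw [hθdef, h] at hu
      exact leadingCoeff_ne_zero.mpr hf0 hu
    · rw [hθdef, h] at hv
      exact leadingCoeff_ne_zero.mpr hg0 hv
  -- degree of PhiH l f g
  obtain ⟨hdPhi, hPhi0⟩ := PhiH_natDegree_eq hl5 hirr hdf hdg huv
  -- degrees of the linear factors
  have hΦdeg : ∀ i, (PhiH l (C (a i) * X + C (b i)) (C (c i) * X + C (d i))).natDegree = l - 1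
      ∧ PhiH l (C (a i) * X + C (b i)) (C (c i) * X + C (d i)) ≠ 0 := by
    intro i
    have hp : (C (a i) * X + C (b i)).natDegree ≤ 1 := by compute_degree
    have hq : (C (c i) * X + C (d i)).natDegree ≤ 1 := by compute_degree
    have hcp : (C (a i) * X + C (b i)).coeff 1 = a i := by
      simp [coeff_add, coeff_C]
    have hcq : (C (c i) * X + C (d i)).coeff 1 = c i := by
      simp [coeff_add, coeff_C]
    have h0 : ¬((C (a i) * X + C (b i)).coeff 1 = 0 ∧ (C (c i) * X + C (d i)).coeff 1 = 0) := by
      rw [hcp, hcq]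
      rintro ⟨h1, h2⟩
      apply hdet i
      rw [h1, h2]
      ring
    have := PhiH_natDegree_eq hl5 hirr hp hq h0
    simpa using this
  set Φ : Fin n → F[X] := fun i => PhiH l (C (a i) * X + C (b i)) (C (c i) * X + C (d i))
    with hΦdef
  have hΦne : ∀ i, Φ i ≠ 0 := fun i => (hΦdeg i).2
  have hprodne : (∏ i, Φ i ^ r i) ≠ 0 :=
    Finset.prod_ne_zero_iff.mpr fun i _ => pow_ne_zero _ (hΦne i)
  have hCα : (C α : F[X]) ≠ 0 := by simpa using hα
  have hΨl : (Ψ ^ l : F[X]) ≠ 0 := pow_ne_zero _ hΨ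
  -- degree equation
  have hkey0 : (l - 1) * θ = l * Ψ.natDegree + ∑ i, r i * (l - 1) := by
    rw [← hdPhi, heq, natDegree_mul (mul_ne_zero hCα hΨl) hprodne,
      natDegree_mul hCα hΨl, natDegree_C, natDegree_pow,
      natDegree_prod _ _ (fun i _ => pow_ne_zero _ (hΦne i))]
    simp only [natDegree_pow]
    congr 1
    · omega
    · exact Finset.sum_congr rfl fun i _ => by rw [(hΦdeg i).1]
  -- first claim : n ≤ θ
  have hsumr : n * (l - 1) ≤ ∑ i, r i * (l - 1) := by
    calc n * (l - 1) = ∑ _i : Fin n, (l - 1) := by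
          rw [Finset.sum_const, Finset.card_univ, Fintype.card_fin, smul_eq_mul]
      _ ≤ ∑ i, r i * (l - 1) := Finset.sum_le_sum fun i _ =>
          Nat.le_mul_of_pos_left _ (hr i)
  have claim1 : n ≤ θ := by
    have h1 : n * (l - 1) ≤ θ * (l - 1) := by
      have := hkey0
      calc n * (l - 1) ≤ ∑ i, r i * (l - 1) := hsumr
        _ ≤ (l - 1) * θ := by omega
        _ = θ * (l - 1) := Nat.mul_comm _ _
    exact Nat.le_of_mul_le_mul_right h1 (by omega)
  refine ⟨claim1, ?_⟩
  -- Mason-Stothers setup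
  set A := f ^ l with hAdef
  set B := -(g ^ l) with hBdef
  set Cp := g ^ l - f ^ l with hCpdef
  have hsum : A + B + Cp = 0 := by rw [hAdef, hBdef, hCpdef]; ring
  have hA0 : A ≠ 0 := pow_ne_zero _ hf0
  have hB0 : B ≠ 0 := neg_ne_zero.mpr (pow_ne_zero _ hg0)
  have hCp0 : Cp ≠ 0 := by
    intro h
    rw [hCpdef, sub_eq_zero] at h
    have hfd : f ∣ g ^ l := by
      rw [h]; exact dvd_pow_self f (by omega)
    have hgd : g ∣ f ^ l := by
      rw [← h]; exact dvd_pow_self g (by omega)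
    have hfu : IsUnit f := (hfg.pow_right).isUnit_of_dvd hfd
    have hgu : IsUnit g := (hfg.symm.pow_right).isUnit_of_dvd hgd
    have h1 := natDegree_eq_zero_of_isUnit hfu
    have h2 := natDegree_eq_zero_of_isUnit hgu
    rw [hθdef] at hθ; omega
  have hfgne : f - g ≠ 0 := by
    intro h
    rw [sub_eq_zero] at h
    exact hCp0 (by rw [hCpdef, h, sub_self])
  -- coprimality
  have hAB : IsCoprime A B := (hfg.pow).neg_right
  have hBC : IsCoprime B Cp := by
    have h1 : IsCoprime (g ^ l) (-(f ^ l)) := (hfg.symm.pow).neg_right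
    have h2 := h1.add_mul_left_right 1
    rw [mul_one] at h2
    have h3 : -(f ^ l) + g ^ l = Cp := by rw [hCpdef]; ring
    rw [h3] at h2
    exact h2.neg_left
  have hCA : IsCoprime Cp A := by
    have h1 : IsCoprime (f ^ l) (-(g ^ l)) := (hfg.pow).neg_right
    have h2 := h1.add_mul_left_right 1
    rw [mul_one] at h2
    have h3 : -(g ^ l) + f ^ l = -Cp := by rw [hCpdef]; ring
    rw [h3] at h2
    have h4 := h2.neg_right
    rw [neg_neg] at h4
    exact h4.symm
  -- characteristic condition
  have hlF : (l : F) ≠ 0 := by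
    intro h0
    apply cycAux_no_root hl5 hirr (1 : F)
    rw [eval_finset_sum]
    simp only [eval_pow, eval_X, one_pow]
    rw [Finset.sum_const, Finset.card_range, nsmul_eq_mul, mul_one]
    exact h0
  -- nonvanishing Wronskian
  have hW : wronskian A B ≠ 0 := by
    rw [Ne, hAB.wronskian_eq_zero_iff]
    rintro ⟨h1, h2⟩
    rw [hAdef, derivative_pow] at h1
    rw [hBdef, derivative_neg, neg_eq_zero, derivative_pow] at h2
    have hf' : derivative f = 0 := by
      rcases mul_eq_zero.mp h1 with h | h
      · rcases mul_eq_zero.mp h with h | h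
        · rw [Polynomial.C_eq_zero] at h
          exact absurd h hlF
        · exact absurd h (pow_ne_zero _ hf0)
      · exact h
    have hg' : derivative g = 0 := by
      rcases mul_eq_zero.mp h2 with h | h
      · rcases mul_eq_zero.mp h with h | h
        · rw [Polynomial.C_eq_zero] at h
          exact absurd h hlF
        · exact absurd h (pow_ne_zero _ hg0)
      · exact h
    rcases hder with h | h
    · exact h hf'
    · exact h hg'
  -- radical degree bounds
  have hradA : (radical A).natDegree ≤ f.natDegree := by
    rw [hAdef, radical_pow f (by omega : l ≠ 0)]
    exact natDegree_le_of_dvd (radical_dvd_self (a := f)) hf0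
  have hradB : (radical B).natDegree ≤ g.natDegree := by
    rw [hBdef, radical_neg, radical_pow g (by omega : l ≠ 0)]
    exact natDegree_le_of_dvd (radical_dvd_self (a := g)) hg0
  -- radical of PhiH l f g
  have hradPhi : (radical (PhiH l f g)).natDegree ≤ Ψ.natDegree + n * (l - 1) := by
    have hassoc : PhiH l f g = C α * (Ψ ^ l * ∏ i, Φ i ^ r i) := by
      rw [heq, mul_assoc]
    obtain ⟨uu, huu⟩ := isUnit_C.mpr (isUnit_iff_ne_zero.mpr hα)
    have hradeq : radical (PhiH l f g) = radical (Ψ ^ l * ∏ i, Φ i ^ r i) := by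
      rw [hassoc, ← huu, radical_mul_of_isUnit_left uu.isUnit]
    rw [hradeq]
    have hdvd1 : radical (Ψ ^ l * ∏ i, Φ i ^ r i)
        ∣ radical (Ψ ^ l) * radical (∏ i, Φ i ^ r i) := radicalAux_mul_dvd hΨl hprodne
    have hne1 : (radical (Ψ ^ l) * radical (∏ i, Φ i ^ r i)) ≠ 0 :=
      mul_ne_zero (radical_ne_zero) (radical_ne_zero)
    refine (natDegree_le_of_dvd hdvd1 hne1).trans ?_
    rw [natDegree_mul (radical_ne_zero) (radical_ne_zero)]
    have h2 : (radical (Ψ ^ l)).natDegree ≤ Ψ.natDegree := by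
      rw [radical_pow Ψ (by omega : l ≠ 0)]
      exact natDegree_le_of_dvd (radical_dvd_self (a := Ψ)) hΨ
    have h3 : (radical (∏ i, Φ i ^ r i)).natDegree ≤ n * (l - 1) := by
      have hdvd2 := radicalAux_prod_dvd Finset.univ (fun i => Φ i ^ r i)
        (fun i _ => pow_ne_zero _ (hΦne i))
      have hne2 : (∏ i, radical (Φ i ^ r i)) ≠ 0 :=
        Finset.prod_ne_zero_iff.mpr fun i _ => radical_ne_zero
      refine (natDegree_le_of_dvd hdvd2 hne2).trans ?_
      rw [natDegree_prod _ _ fun i _ => radical_ne_zero]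
      calc (∑ i, (radical (Φ i ^ r i)).natDegree) ≤ ∑ _i : Fin n, (l - 1) := by
            refine Finset.sum_le_sum fun i _ => ?_
            rw [radical_pow (Φ i) (by have := hr i; omega)]
            refine (natDegree_le_of_dvd (radical_dvd_self (a := (Φ i))) (hΦne i)).trans ?_
            rw [(hΦdeg i).1]
        _ = n * (l - 1) := by
            rw [Finset.sum_const, Finset.card_univ, Fintype.card_fin, smul_eq_mul]
    omega
  -- radical of Cp
  have hradCp : (radical Cp).natDegree ≤ (f - g).natDegree + (Ψ.natDegree + n * (l - 1)) := by
    have hfact : PhiH l f g * (f - g) = f ^ l - g ^ l := by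
      rw [PhiH]; exact geom_sum₂_mul f g l
    have hCpeq : Cp = -(PhiH l f g * (f - g)) := by rw [hfact, hCpdef]; ring
    rw [hCpeq, radical_neg]
    have hdvd := radicalAux_mul_dvd hPhi0 hfgne
    have hne1 : (radical (PhiH l f g) * radical (f - g)) ≠ 0 :=
      mul_ne_zero (radical_ne_zero) (radical_ne_zero)
    refine (natDegree_le_of_dvd hdvd hne1).trans ?_
    rw [natDegree_mul (radical_ne_zero) (radical_ne_zero)]
    have h2 : (radical (f - g)).natDegree ≤ (f - g).natDegree :=
      natDegree_le_of_dvd (radical_dvd_self) hfgne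
    omega
  -- total radical degree
  have hradtot : (radical (A * B * Cp)).natDegree
      = (radical A).natDegree + (radical B).natDegree + (radical Cp).natDegree := by
    rw [radical_mul (hCA.symm.mul_left hBC).isRelPrime, radical_mul hAB.isRelPrime,
      natDegree_mul (mul_ne_zero (radical_ne_zero) (radical_ne_zero)) (radical_ne_zero),
      natDegree_mul (radical_ne_zero) (radical_ne_zero)]
  set R := (radical (A * B * Cp)).natDegree with hRdef
  have hdA : A.natDegree = l * f.natDegree := by rw [hAdef, natDegree_pow]
  have hdB : B.natDegree = l * g.natDegree := by rw [hBdef, natDegree_neg, natDegree_pow]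
  have hfgsub : (f - g).natDegree ≤ θ :=
    (natDegree_sub_le f g).trans (by omega)
  -- the key inequality
  have hkey : l * θ + 2 ≤ 3 * θ + Ψ.natDegree + n * (l - 1) := by
    by_cases hdfg : f.natDegree = g.natDegree
    · have hfθ : f.natDegree = θ := by rw [hθdef]; omega
      have hgθ : g.natDegree = θ := by rw [hθdef]; omega
      by_cases huveq : f.coeff θ = g.coeff θ
      · -- ordinary Mason, saving from deg (f - g) ≤ θ - 1
        have hmason : A.natDegree + 1 ≤ R := by
          rcases Polynomial.abc hA0 hB0 hCp0 hAB hsum with h | h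
          · exact h.1
          · exact absurd (hAB.wronskian_eq_zero_iff.mpr ⟨h.1, h.2.1⟩) hW
        have hsub : (f - g).natDegree + 1 ≤ θ := by
          have h1 : (f - g).coeff θ = 0 := by
            rw [coeff_sub, huveq, sub_self]
          have h2 : (f - g).natDegree ≠ θ := by
            intro h
            apply hfgne
            apply leadingCoeff_eq_zero.mp
            rw [leadingCoeff, h]
            exact h1
          omega
        rw [hdA, hfθ] at hmason
        rw [hradtot] at hRdef
        omega
      · -- refined Mason
        have hCdeg : Cp.natDegree = l * θ := by
          have hcoeff : Cp.coeff (l * θ) = (g.coeff θ) ^ l - (f.coeff θ) ^ l := by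
            rw [hCpdef, coeff_sub, coeff_pow_of_natDegree_le hdg,
              coeff_pow_of_natDegree_le hdf]
          have hne : Cp.coeff (l * θ) ≠ 0 := by
            rw [hcoeff, sub_ne_zero]
            intro h
            exact huveq (powAux_inj hl5 hirr h.symm)
          have hle : Cp.natDegree ≤ l * θ := by
            rw [hCpdef]
            refine (natDegree_sub_le _ _).trans (max_le ?_ ?_)
            · rw [natDegree_pow, hgθ]
            · rw [natDegree_pow, hfθ]
          exact le_antisymm hle (le_natDegree_of_ne_zero hne)
        have hmason := abcAux_refined hCp0 hAB hBC hCA hsum hW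
          (by rw [hdA, hdB, hdfg])
        rw [hCdeg] at hmason
        rw [hradtot] at hRdef
        omega
    · -- distinct degrees : saving from deg f + deg g ≤ 2θ - 1
      have hmason : l * θ + 1 ≤ R := by
        rcases Polynomial.abc hA0 hB0 hCp0 hAB hsum with h | h
        · rcases max_choice f.natDegree g.natDegree with hm | hm
          · have := h.1; rw [hdA] at this
            rw [hθdef, hm]; exact this
          · have := h.2.1; rw [hdB] at this
            rw [hθdef, hm]; exact this
        · exact absurd (hAB.wronskian_eq_zero_iff.mpr ⟨h.1, h.2.1⟩) hW
      have hsum2 : f.natDegree + g.natDegree + 1 ≤ 2 * θ := by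
        rw [hθdef] at *
        omega
      rw [hradtot] at hRdef
      omega
  -- final arithmetic over ℤ
  have hL1 : ((l - 1 : ℕ) : ℤ) = (l : ℤ) - 1 := by
    have : 1 ≤ l := by omega
    push_cast [Nat.cast_sub this]
    ring
  set L : ℤ := (l : ℤ) with hLdef
  set T : ℤ := (θ : ℤ) with hTdef
  set N : ℤ := (n : ℤ) with hNdef
  set D : ℤ := (Ψ.natDegree : ℤ) with hDdef
  set S : ℤ := ((∑ i, r i * (l - 1) : ℕ) : ℤ) with hSdef
  have F1 : (L - 1) * T = L * D + S := by
    rw [hSdef, hTdef, hDdef, hLdef, ← hL1]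
    exact_mod_cast hkey0
  have F2 : N * (L - 1) ≤ S := by
    rw [hSdef, hNdef, hLdef, ← hL1]
    exact_mod_cast hsumr
  have F3 : L * T + 2 ≤ 3 * T + D + N * (L - 1) := by
    rw [hTdef, hDdef, hNdef, hLdef, ← hL1]
    exact_mod_cast hkey
  have hL0 : (0 : ℤ) ≤ L := by positivity
  have F5 := mul_le_mul_of_nonneg_left F3 hL0
  have hTmax : (f.natDegree : ℤ) ⊔ (g.natDegree : ℤ) = T := by
    rw [hTdef, hθdef, Nat.cast_max]
  rw [hTmax]
  linarith [F5, F1, F2]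
end

section
/- Let l ≥ 5 be a prime and F a field such that the l-th cyclotomic polynomial Φ_l(X) is irreducible in F[x]. Assume the standing factorization hypothesis, assume that the formal derivative f′ ≠ 0 or g′ ≠ 0, assume 2 ≤ n ≤ (l² − 4l + 1)/2, and assume in addition that for each i = 1,…,n there is an integer m_i with 1 ≤ m_i ≤ l−1 such that Φ_l(a_i x + b_i, c_i x + d_i) divides f·(c_i x + d_i)^{m_i} − g·(a_i x + b_i)^{m_i} in F[x]. Then l ≤ 2n + 1. -/
open Polynomial

open UniqueFactorizationMonoid UniqueFactorizationDomain EuclideanDomain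

section AuxLemmas
variable {F : Type*} [Field F]

lemma PhiH_mul_sub (l : ℕ) (f g : F[X]) : PhiH l f g * (f - g) = f ^ l - g ^ l :=
  geom_sum₂_mul f g l

lemma PhiH_comm (l : ℕ) (f g : F[X]) : PhiH l f g = PhiH l g f := by
  unfold PhiH
  rw [← Finset.sum_range_reflect]
  refine Finset.sum_congr rfl fun j hj => ?_
  rw [Finset.mem_range] at hj
  have h1 : l - 1 - (l - 1 - j) = j := by omega
  rw [h1, mul_comm]

lemma no_root {l : ℕ} (hl5 : 5 ≤ l)
    (hirr : Irreducible (∑ i ∈ Finset.range l, (X : F[X]) ^ i)) (t : F) :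
    (∑ i ∈ Finset.range l, t ^ i) ≠ 0 := by
  intro h0
  set Φ : F[X] := ∑ i ∈ Finset.range l, X ^ i with hΦ
  have hev : Φ.eval t = 0 := by
    rw [hΦ, eval_finset_sum]
    simpa using h0
  obtain ⟨q, hq⟩ := dvd_iff_isRoot.mpr hev
  have hdegΦ : Φ.natDegree = l - 1 := by
    have hle : Φ.natDegree ≤ l - 1 := by
      apply natDegree_sum_le_of_forall_le
      intro i hi
      rw [Finset.mem_range] at hi
      simpa using by omega
    have hco : Φ.coeff (l - 1) = 1 := by
      rw [hΦ, finset_sum_coeff]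
      rw [Finset.sum_eq_single (l - 1)]
      · simp
      · intro i hi hine
        rw [Finset.mem_range] at hi
        simp only [coeff_X_pow, ite_eq_right_iff]
        intro h; omega
      · intro h
        exact absurd (Finset.mem_range.mpr (by omega)) h
    exact le_antisymm hle (le_natDegree_of_ne_zero (by rw [hco]; exact one_ne_zero))
  rcases hirr.isUnit_or_isUnit hq with h | h
  · exact Polynomial.not_isUnit_X_sub_C t h
  · have hq0 : q ≠ 0 := h.ne_zero
    have : Φ.natDegree = 1 := by
      rw [hq, natDegree_mul (X_sub_C_ne_zero t) hq0, natDegree_X_sub_C,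
        natDegree_eq_zero_of_isUnit h]
    omega


lemma natDegree_PhiH_of_le {l : ℕ} (hl5 : 5 ≤ l)
    (hirr : Irreducible (∑ i ∈ Finset.range l, (X : F[X]) ^ i))
    {f g : F[X]} (hf : f ≠ 0) (hg : g ≠ 0) (hle : g.natDegree ≤ f.natDegree) :
    (PhiH l f g).natDegree = (l - 1) * f.natDegree := by
  rcases eq_or_lt_of_le hle with heq | hlt
  · -- equal degrees
    have hub : (PhiH l f g).natDegree ≤ (l - 1) * f.natDegree := by
      apply natDegree_sum_le_of_forall_le
      intro j hj
      rw [Finset.mem_range] at hj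
      calc (f ^ j * g ^ (l - 1 - j)).natDegree
          ≤ (f ^ j).natDegree + (g ^ (l - 1 - j)).natDegree := natDegree_mul_le
        _ = j * f.natDegree + (l - 1 - j) * g.natDegree := by rw [natDegree_pow, natDegree_pow]
        _ = (j + (l - 1 - j)) * f.natDegree := by rw [← heq]; ring
        _ = (l - 1) * f.natDegree := by congr 1; omega
    have hco : (PhiH l f g).coeff ((l - 1) * f.natDegree)
        = ∑ j ∈ Finset.range l, f.leadingCoeff ^ j * g.leadingCoeff ^ (l - 1 - j) := by
      unfold PhiH
      rw [finset_sum_coeff]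
      refine Finset.sum_congr rfl fun j hj => ?_
      rw [Finset.mem_range] at hj
      have hd : (f ^ j * g ^ (l - 1 - j)).natDegree = (l - 1) * f.natDegree := by
        rw [natDegree_mul (pow_ne_zero _ hf) (pow_ne_zero _ hg), natDegree_pow, natDegree_pow,
          heq]
        have h2 : j + (l - 1 - j) = l - 1 := by omega
        calc j * f.natDegree + (l - 1 - j) * f.natDegree
            = (j + (l - 1 - j)) * f.natDegree := by ring
          _ = (l - 1) * f.natDegree := by rw [h2]
      rw [← hd, coeff_natDegree, leadingCoeff_mul, leadingCoeff_pow, leadingCoeff_pow]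
    have hne : (∑ j ∈ Finset.range l, f.leadingCoeff ^ j * g.leadingCoeff ^ (l - 1 - j)) ≠ 0 := by
      have hcf : f.leadingCoeff ≠ 0 := leadingCoeff_ne_zero.mpr hf
      have hcg : g.leadingCoeff ≠ 0 := leadingCoeff_ne_zero.mpr hg
      have hrw : (∑ j ∈ Finset.range l, f.leadingCoeff ^ j * g.leadingCoeff ^ (l - 1 - j))
          = g.leadingCoeff ^ (l - 1) * ∑ j ∈ Finset.range l,
              (f.leadingCoeff / g.leadingCoeff) ^ j := by
        rw [Finset.mul_sum]
        refine Finset.sum_congr rfl fun j hj => ?_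
        rw [Finset.mem_range] at hj
        rw [_root_.div_pow, pow_sub₀ _ hcg (by omega : j ≤ l - 1)]
        field_simp
      rw [hrw]
      exact mul_ne_zero (pow_ne_zero _ hcg) (no_root hl5 hirr _)
    exact le_antisymm hub (le_natDegree_of_ne_zero (by rw [hco]; exact hne))
  · -- g.natDegree < f.natDegree
    have hsplit : PhiH l f g
        = (∑ j ∈ Finset.range (l - 1), f ^ j * g ^ (l - 1 - j)) + f ^ (l - 1) := by
      unfold PhiH
      have h1 : l = (l - 1) + 1 := by omega
      conv_lhs => rw [h1]
      rw [Finset.sum_range_succ]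
      congr 1
      simp
    have htail : (∑ j ∈ Finset.range (l - 1), f ^ j * g ^ (l - 1 - j)).natDegree
        < (l - 1) * f.natDegree := by
      have hb : (∑ j ∈ Finset.range (l - 1), f ^ j * g ^ (l - 1 - j)).natDegree
          ≤ (l - 2) * f.natDegree + g.natDegree := by
        apply natDegree_sum_le_of_forall_le
        intro j hj
        rw [Finset.mem_range] at hj
        have hj2 : j ≤ l - 2 := by omega
        calc (f ^ j * g ^ (l - 1 - j)).natDegree
            ≤ (f ^ j).natDegree + (g ^ (l - 1 - j)).natDegree := natDegree_mul_le
          _ = j * f.natDegree + (l - 1 - j) * g.natDegree := by rw [natDegree_pow, natDegree_pow]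
          _ = j * f.natDegree + (l - 2 - j) * g.natDegree + g.natDegree := by
              have : l - 1 - j = (l - 2 - j) + 1 := by omega
              rw [this]; ring
          _ ≤ j * f.natDegree + (l - 2 - j) * f.natDegree + g.natDegree := by
              have := Nat.mul_le_mul_left (l - 2 - j) hle
              omega
          _ = (j + (l - 2 - j)) * f.natDegree + g.natDegree := by ring
          _ = (l - 2) * f.natDegree + g.natDegree := by
              congr 2; omega
      have hfin : (l - 2) * f.natDegree + g.natDegree < (l - 1) * f.natDegree := by
        have h1 : (l - 1) * f.natDegree = (l - 2) * f.natDegree + f.natDegree := by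
          have : l - 1 = (l - 2) + 1 := by omega
          rw [this]; ring
        omega
      omega
    rw [hsplit, natDegree_add_eq_right_of_natDegree_lt (by rwa [natDegree_pow]), natDegree_pow]

lemma natDegree_PhiH {l : ℕ} (hl5 : 5 ≤ l)
    (hirr : Irreducible (∑ i ∈ Finset.range l, (X : F[X]) ^ i))
    {f g : F[X]} (hf : f ≠ 0) (hg : g ≠ 0) :
    (PhiH l f g).natDegree = (l - 1) * max f.natDegree g.natDegree := by
  rcases le_total g.natDegree f.natDegree with h | h
  · rw [max_eq_left h]; exact natDegree_PhiH_of_le hl5 hirr hf hg h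
  · rw [max_eq_right h, PhiH_comm]; exact natDegree_PhiH_of_le hl5 hirr hg hf h

end AuxLemmas

section AuxLemmas2
variable {F : Type*} [Field F] [DecidableEq F]

lemma radical_mul_dvd' {a b : F[X]} (ha : a ≠ 0) (hb : b ≠ 0) :
    radical (a * b) ∣ radical a * radical b := by
  have h : primeFactors (a * b) = primeFactors a ∪ primeFactors b := by
    ext x
    simp [UniqueFactorizationMonoid.mem_primeFactors, normalizedFactors_mul ha hb]
  rw [radical, radical, radical, h, ← Finset.union_sdiff_self_eq_union,
    Finset.prod_union Finset.sdiff_disjoint.symm]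
  exact mul_dvd_mul dvd_rfl
    (Finset.prod_dvd_prod_of_subset _ _ _ (Finset.sdiff_subset))

lemma radical_prod_dvd {ι : Type*} {s : Finset ι} {h : ι → F[X]} (hne : ∀ i ∈ s, h i ≠ 0) :
    radical (∏ i ∈ s, h i) ∣ ∏ i ∈ s, radical (h i) := by
  classical
  induction s using Finset.cons_induction with
  | empty => simp
  | cons i s his ih =>
    rw [Finset.prod_cons, Finset.prod_cons]
    refine dvd_trans (radical_mul_dvd' (hne i (Finset.mem_cons_self i s)) ?_) ?_
    · exact Finset.prod_ne_zero_iff.mpr fun j hj => hne j (Finset.mem_cons_of_mem hj)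
    · exact mul_dvd_mul dvd_rfl (ih fun j hj => hne j (Finset.mem_cons_of_mem hj))


end AuxLemmas2

section AuxLemmas3
variable {F : Type*} [Field F]

lemma lin_coprime {a b c d : F} (hdet : a * d - b * c ≠ 0) :
    IsCoprime (C a * X + C b) (C c * X + C d) := by
  set e : F := a * d - b * c
  refine ⟨C (-(c / e)), C (a / e), ?_⟩
  have h1 : -(c / e) * a + a / e * c = 0 := by field_simp; ring
  have h2 : -(c / e) * b + a / e * d = 1 := by
    field_simp
    ring
  calc C (-(c / e)) * (C a * X + C b) + C (a / e) * (C c * X + C d)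
      = C (-(c / e) * a + a / e * c) * X + C (-(c / e) * b + a / e * d) := by
        simp only [C_add, C_mul, C_neg]; ring
    _ = 1 := by rw [h1, h2]; simp

lemma extract_pow {f g x y : F[X]} (hfg : IsCoprime f g) (hxy : IsCoprime x y)
    (hx : x ≠ 0) {s : ℕ} (h : f * y ^ s = g * x ^ s) :
    ∃ β : F, β ≠ 0 ∧ f = C β * x ^ s ∧ g = C β * y ^ s := by
  have h1 : x ^ s ∣ f := (hxy.pow (m := s) (n := s)).dvd_of_dvd_mul_right
    ⟨g, by rw [h]; try ring⟩
  have h2 : f ∣ x ^ s := hfg.dvd_of_dvd_mul_left ⟨y ^ s, by rw [← h]; try ring⟩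
  obtain ⟨w, hw⟩ := (associated_of_dvd_dvd h2 h1).symm
  obtain ⟨β, hβu, hβ⟩ := Polynomial.isUnit_iff.mp w.isUnit
  have hβ0 : β ≠ 0 := hβu.ne_zero
  refine ⟨β, hβ0, ?_, ?_⟩
  · rw [← hw, ← hβ]; ring
  · have hx' : x ^ s ≠ 0 := pow_ne_zero _ hx
    apply mul_right_cancel₀ hx'
    rw [← h, ← hw, ← hβ]; ring

lemma cancel_C {β₀ β₁ : F} (hβ₁ : β₁ ≠ 0) {A B : F[X]} (h : C β₁ * B = C β₀ * A) :
    B = C (β₀ / β₁) * A := by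
  apply mul_left_cancel₀ (C_ne_zero.mpr hβ₁)
  rw [h, ← mul_assoc, ← C_mul, mul_div_cancel₀ _ hβ₁]

lemma linear_eq_linear {p q p' q' δ : F}
    (h : C p * X + C q = C δ * (C p' * X + C q')) : p = δ * p' ∧ q = δ * q' := by
  have h1 := congrArg (fun r : F[X] => r.coeff 1) h
  have h0 := congrArg (fun r : F[X] => r.coeff 0) h
  simp only [coeff_add, coeff_C_mul, coeff_C, mul_add] at h1 h0
  constructor
  · simpa using h1
  · simpa using h0

lemma pow_linear {w1 w2 : F[X]} {γ : F} (hd1 : w1.natDegree ≤ 1) (hd2 : w2.natDegree ≤ 1)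
    (hw1 : w1 ≠ 0) (hγ : γ ≠ 0) {D : ℕ} (hD : 1 ≤ D) (h : w2 ^ D = C γ * w1 ^ D) :
    ∃ δ : F, δ ≠ 0 ∧ w2 = C δ * w1 ∧ δ ^ D = γ := by
  have hw2 : w2 ≠ 0 := by
    intro h0
    rw [h0, zero_pow (by omega)] at h
    exact (mul_ne_zero (C_ne_zero.mpr hγ) (pow_ne_zero _ hw1)) h.symm
  rcases Nat.lt_or_ge w1.natDegree 1 with h10 | h11
  · -- w1 constant
    have h10' : w1.natDegree = 0 := by omega
    have hp : w1 = C (w1.coeff 0) := eq_C_of_natDegree_eq_zero h10'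
    set p := w1.coeff 0 with hpdef
    have hp0 : p ≠ 0 := fun h0 => hw1 (by rw [hp, h0, map_zero])
    have hw2d : w2.natDegree = 0 := by
      have hh : (w2 ^ D).natDegree = 0 := by
        rw [h, natDegree_mul (C_ne_zero.mpr hγ) (pow_ne_zero _ hw1), natDegree_C,
          natDegree_pow, h10']
        simp
      rw [natDegree_pow] at hh
      rcases Nat.mul_eq_zero.mp hh with h' | h' <;> omega
    have hq : w2 = C (w2.coeff 0) := eq_C_of_natDegree_eq_zero hw2d
    set q := w2.coeff 0 with hqdef
    have hq0 : q ≠ 0 := fun h0 => hw2 (by rw [hq, h0, map_zero])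
    have hkey : q ^ D = γ * p ^ D := by
      have := h
      rw [hq, hp, ← C_pow, ← C_pow, ← C_mul] at this
      exact C_injective this
    refine ⟨q / p, div_ne_zero hq0 hp0, ?_, ?_⟩
    · rw [hq, hp, ← C_mul, div_mul_cancel₀ _ hp0]
    · rw [_root_.div_pow, hkey]
      exact mul_div_cancel_right₀ γ (pow_ne_zero _ hp0)
  · -- w1 linear
    have h1 : w1.natDegree = 1 := le_antisymm hd1 h11
    have hlc : w1.coeff 1 ≠ 0 := by
      have := mt leadingCoeff_eq_zero.mp hw1
      rwa [leadingCoeff, h1] at this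
    set p := w1.coeff 1 with hpdef
    set q := w1.coeff 0 with hqdef
    have hw1e : w1 = C p * X + C q := eq_X_add_C_of_natDegree_le_one hd1
    set t : F := -(q / p) with htdef
    have hfac : w1 = C p * (X - C t) := by
      have hpt : p * t = -q := by
        rw [htdef]
        field_simp
      rw [hw1e, mul_sub, ← C_mul, hpt, map_neg, sub_neg_eq_add]
    have hdvdt : (X - C t) ∣ w2 := by
      apply (prime_X_sub_C t).dvd_of_dvd_pow (n := D)
      rw [h, hfac, mul_pow]
      exact (dvd_pow_self (X - C t) (by omega : D ≠ 0)).trans ⟨C γ * C p ^ D, by ring⟩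
    obtain ⟨h2, hh2⟩ := hdvdt
    have hne2 : h2 ≠ 0 := by
      rintro rfl
      rw [mul_zero] at hh2
      exact hw2 hh2
    have hh2d : h2.natDegree = 0 := by
      have := hd2
      rw [hh2, natDegree_mul (X_sub_C_ne_zero t) hne2, natDegree_X_sub_C] at this
      omega
    have hρ : h2 = C (h2.coeff 0) := eq_C_of_natDegree_eq_zero hh2d
    set ρ := h2.coeff 0 with hρdef
    have hρ0 : ρ ≠ 0 := fun h0 => hne2 (by rw [hρ, h0, map_zero])
    have hw2e : w2 = C (ρ / p) * w1 := by
      rw [hh2, hρ, hfac, ← mul_assoc, ← C_mul, div_mul_cancel₀ _ hlc]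
      ring
    refine ⟨ρ / p, div_ne_zero hρ0 hlc, hw2e, ?_⟩
    have hcan : C ((ρ / p) ^ D) * w1 ^ D = C γ * w1 ^ D := by
      have := h
      rw [hw2e, mul_pow, ← C_pow] at this
      exact this
    exact C_injective (mul_right_cancel₀ (pow_ne_zero _ hw1) hcan)


lemma lin_u_ne_zero {a b c d : F} (hdet : a * d - b * c ≠ 0) : C a * X + C b ≠ 0 := by
  intro h0
  have h1 : a = 0 := by
    have := congrArg (fun r : F[X] => r.coeff 1) h0
    simpa [coeff_C] using this
  have h2 : b = 0 := by
    have := congrArg (fun r : F[X] => r.coeff 0) h0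
    simpa [coeff_C] using this
  exact hdet (by rw [h1, h2]; ring)

lemma lin_v_ne_zero {a b c d : F} (hdet : a * d - b * c ≠ 0) : C c * X + C d ≠ 0 := by
  have : c * b - d * a ≠ 0 := fun h0 => hdet (by linear_combination -h0)
  exact lin_u_ne_zero this

lemma max_deg_lin {a b c d : F} (hdet : a * d - b * c ≠ 0) :
    max (C a * X + C b).natDegree (C c * X + C d).natDegree = 1 := by
  have h1 : (C a * X + C b).natDegree ≤ 1 := natDegree_linear_le
  have h2 : (C c * X + C d).natDegree ≤ 1 := natDegree_linear_le
  rcases eq_or_ne a 0 with ha | ha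
  · have hc : c ≠ 0 := fun h0 => hdet (by rw [ha, h0]; ring)
    have := natDegree_linear (b := d) hc
    omega
  · have := natDegree_linear (b := b) ha
    omega

lemma natDegree_P {l : ℕ} (hl5 : 5 ≤ l)
    (hirr : Irreducible (∑ i ∈ Finset.range l, (X : F[X]) ^ i))
    {a b c d : F} (hdet : a * d - b * c ≠ 0) :
    (PhiH l (C a * X + C b) (C c * X + C d)).natDegree = l - 1 := by
  rw [natDegree_PhiH hl5 hirr (lin_u_ne_zero hdet) (lin_v_ne_zero hdet), max_deg_lin hdet,
    mul_one]

lemma P_ne_zero {l : ℕ} (hl5 : 5 ≤ l)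
    (hirr : Irreducible (∑ i ∈ Finset.range l, (X : F[X]) ^ i))
    {a b c d : F} (hdet : a * d - b * c ≠ 0) :
    PhiH l (C a * X + C b) (C c * X + C d) ≠ 0 := by
  intro h0
  have := natDegree_P hl5 hirr hdet
  rw [h0, natDegree_zero] at this
  omega

lemma P_coprime_v {l : ℕ} (hl5 : 5 ≤ l) {a b c d : F} (hdet : a * d - b * c ≠ 0) :
    IsCoprime (PhiH l (C a * X + C b) (C c * X + C d)) (C c * X + C d) := by
  set u : F[X] := C a * X + C b with hu
  set v : F[X] := C c * X + C d with hv
  have hsplit : PhiH l u v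
      = u ^ (l - 1) + v * (∑ j ∈ Finset.range (l - 1), u ^ j * v ^ (l - 2 - j)) := by
    unfold PhiH
    have h1 : l = (l - 1) + 1 := by omega
    conv_lhs => rw [h1]
    rw [Finset.sum_range_succ]
    simp only [Nat.add_sub_cancel]
    rw [add_comm]
    congr 1
    · simp
    · rw [Finset.mul_sum]
      refine Finset.sum_congr rfl fun j hj => ?_
      rw [Finset.mem_range] at hj
      have h2 : l - 1 - j = (l - 2 - j) + 1 := by omega
      rw [h2, pow_succ]
      ring
  rw [hsplit]
  exact ((lin_coprime hdet).pow_left).add_mul_left_left _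

/-- The branch lemma: either `l ≤ 2D+2`, or `f,g` are essentially powers of the linear forms. -/
lemma branch_lemma {l : ℕ} (hl5 : 5 ≤ l)
    (hirr : Irreducible (∑ i ∈ Finset.range l, (X : F[X]) ^ i))
    {f g : F[X]} (hfg : IsCoprime f g) (hf : f ≠ 0) (hg : g ≠ 0)
    {a b c d : F} (hdet : a * d - b * c ≠ 0) {m : ℕ} (hm1 : 1 ≤ m) (hm2 : m ≤ l - 1)
    (hdvd : PhiH l (C a * X + C b) (C c * X + C d) ∣
      f * (C c * X + C d) ^ m - g * (C a * X + C b) ^ m)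
    (hl2D : 2 * max f.natDegree g.natDegree + 3 ≤ l) :
    ∃ β : F, β ≠ 0 ∧
      ((f = C β * (C a * X + C b) ^ (max f.natDegree g.natDegree) ∧
        g = C β * (C c * X + C d) ^ (max f.natDegree g.natDegree)) ∨
       (f = C β * (C c * X + C d) ^ (max f.natDegree g.natDegree) ∧
        g = C β * (C a * X + C b) ^ (max f.natDegree g.natDegree))) := by
  set D := max f.natDegree g.natDegree with hD
  set u : F[X] := C a * X + C b with hu
  set v : F[X] := C c * X + C d with hv
  have hu0 : u ≠ 0 := lin_u_ne_zero hdet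
  have hv0 : v ≠ 0 := lin_v_ne_zero hdet
  have hule : u.natDegree ≤ 1 := natDegree_linear_le
  have hvle : v.natDegree ≤ 1 := natDegree_linear_le
  have huv : IsCoprime u v := lin_coprime hdet
  have hPdeg : (PhiH l u v).natDegree = l - 1 := natDegree_P hl5 hirr hdet
  have hfn : f.natDegree ≤ D := le_max_left _ _
  have hgn : g.natDegree ≤ D := le_max_right _ _
  have hdegsub : ∀ (s : ℕ) (p q : F[X]), p.natDegree ≤ 1 → q.natDegree ≤ 1 →
      (f * p ^ s - g * q ^ s).natDegree ≤ D + s := by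
    intro s p q hp hq
    refine le_trans (natDegree_sub_le _ _) (max_le ?_ ?_)
    · refine le_trans natDegree_mul_le (add_le_add hfn ?_)
      refine le_trans natDegree_pow_le ?_
      calc s * p.natDegree ≤ s * 1 := Nat.mul_le_mul_left s hp
        _ = s := mul_one s
    · refine le_trans natDegree_mul_le (add_le_add hgn ?_)
      refine le_trans natDegree_pow_le ?_
      calc s * q.natDegree ≤ s * 1 := Nat.mul_le_mul_left s hq
        _ = s := mul_one s
  have hDexp : ∀ (β : F), β ≠ 0 → ∀ s : ℕ, ∀ w w' : F[X],
      f = C β * w ^ s → g = C β * w' ^ s → w ≠ 0 → w' ≠ 0 →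
      max w.natDegree w'.natDegree = 1 → D = s := by
    intro β hβ s w w' hfe hge hw hw' hmax
    have h1 : f.natDegree = s * w.natDegree := by
      rw [hfe, natDegree_mul (C_ne_zero.mpr hβ) (pow_ne_zero _ hw), natDegree_C, natDegree_pow,
        zero_add]
    have h2 : g.natDegree = s * w'.natDegree := by
      rw [hge, natDegree_mul (C_ne_zero.mpr hβ) (pow_ne_zero _ hw'), natDegree_C, natDegree_pow,
        zero_add]
    have h4 : w.natDegree ≤ 1 := by omega
    have h5 : w'.natDegree ≤ 1 := by omega
    rcases Nat.le_one_iff_eq_zero_or_eq_one.mp h4 with h | h <;>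
      rcases Nat.le_one_iff_eq_zero_or_eq_one.mp h5 with h' | h' <;>
        rw [h] at h1 <;> rw [h'] at h2 <;> rw [h, h'] at hmax <;>
          simp only [mul_zero, mul_one] at h1 h2 <;> omega
  by_cases hcs : D + m ≤ l - 2
  · -- first branch
    have h0 : f * v ^ m - g * u ^ m = 0 := by
      by_contra hne
      have hle := natDegree_le_of_dvd hdvd hne
      rw [hPdeg] at hle
      have := hdegsub m v u hvle hule
      omega
    obtain ⟨β, hβ, hfe, hge⟩ := extract_pow hfg huv hu0 (sub_eq_zero.mp h0)
    have hDm : D = m := hDexp β hβ m u v hfe hge hu0 hv0 (max_deg_lin hdet)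
    exact ⟨β, hβ, Or.inl ⟨by rw [hfe, hDm], by rw [hge, hDm]⟩⟩
  · -- second branch
    have hm3 : D + 2 ≤ m := by omega
    have hPuv : PhiH l u v ∣ u ^ l - v ^ l := ⟨u - v, (PhiH_mul_sub l u v).symm⟩
    have hid : v ^ m * (f * u ^ (l - m) - g * v ^ (l - m))
        = u ^ (l - m) * (f * v ^ m - g * u ^ m) + g * (u ^ l - v ^ l) := by
      have e1 : u ^ (l - m) * u ^ m = u ^ l := by
        rw [← pow_add]; congr 1; omega
      have e2 : v ^ m * v ^ (l - m) = v ^ l := by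
        rw [← pow_add]; congr 1; omega
      linear_combination g * e1 - g * e2
    have hdvdB : PhiH l u v ∣ f * u ^ (l - m) - g * v ^ (l - m) := by
      refine ((P_coprime_v hl5 hdet).pow_right (n := m)).dvd_of_dvd_mul_left (z := f * u ^ (l - m) - g * v ^ (l - m)) ?_
      rw [hid]
      exact dvd_add (hdvd.mul_left _) (hPuv.mul_left g)
    have h0 : f * u ^ (l - m) - g * v ^ (l - m) = 0 := by
      by_contra hne
      have hle := natDegree_le_of_dvd hdvdB hne
      rw [hPdeg] at hle
      have := hdegsub (l - m) u v hule hvle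
      omega
    obtain ⟨β, hβ, hfe, hge⟩ := extract_pow hfg huv.symm hv0 (sub_eq_zero.mp h0)
    have hDm : D = l - m := hDexp β hβ (l - m) v u hfe hge hv0 hu0
      (by rw [max_comm]; exact max_deg_lin hdet)
    exact ⟨β, hβ, Or.inr ⟨by rw [hfe, hDm], by rw [hge, hDm]⟩⟩


lemma scale_helper {x y z : F} (hy : y ≠ 0) : x * z = y * (x * y⁻¹ * z) := by
  field_simp

lemma pair_lemma {f g : F[X]} {D : ℕ} (hD : 1 ≤ D)
    {a0 b0 c0 d0 a1 b1 c1 d1 : F}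
    (hdet0 : a0 * d0 - b0 * c0 ≠ 0) (hdet1 : a1 * d1 - b1 * c1 ≠ 0)
    {β₀ β₁ : F} (hβ₀ : β₀ ≠ 0) (hβ₁ : β₁ ≠ 0)
    (h0 : (f = C β₀ * (C a0 * X + C b0) ^ D ∧ g = C β₀ * (C c0 * X + C d0) ^ D) ∨
          (f = C β₀ * (C c0 * X + C d0) ^ D ∧ g = C β₀ * (C a0 * X + C b0) ^ D))
    (h1 : (f = C β₁ * (C a1 * X + C b1) ^ D ∧ g = C β₁ * (C c1 * X + C d1) ^ D) ∨
          (f = C β₁ * (C c1 * X + C d1) ^ D ∧ g = C β₁ * (C a1 * X + C b1) ^ D)) :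
    ∃ (α μ : F) (k : ℕ), α ≠ 0 ∧ 0 < k ∧ μ ^ k = 1 ∧
      ((a1 = α * (μ * a0) ∧ b1 = α * (μ * b0) ∧ c1 = α * c0 ∧ d1 = α * d0) ∨
       (a1 = α * (μ * c0) ∧ b1 = α * (μ * d0) ∧ c1 = α * a0 ∧ d1 = α * b0)) := by
  set γ := β₀ / β₁ with hγ
  have hγ0 : γ ≠ 0 := div_ne_zero hβ₀ hβ₁
  have key : ∀ w0 w1 : F[X], w0.natDegree ≤ 1 → w1.natDegree ≤ 1 → w0 ≠ 0 →
      C β₁ * w1 ^ D = C β₀ * w0 ^ D → ∃ δ : F, δ ≠ 0 ∧ w1 = C δ * w0 ∧ δ ^ D = γ := by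
    intro w0 w1 hw0d hw1d hw0 hEq
    exact pow_linear hw0d hw1d hw0 hγ0 hD (cancel_C hβ₁ hEq)
  have hmupow : ∀ δ δ' : F, δ ^ D = γ → δ' ^ D = γ → (δ * δ'⁻¹) ^ D = 1 := by
    intro δ δ' hδ hδ'
    rw [mul_pow, inv_pow, hδ, hδ', mul_inv_cancel₀ hγ0]
  rcases h0 with ⟨hf0, hg0⟩ | ⟨hf0, hg0⟩ <;> rcases h1 with ⟨hf1, hg1⟩ | ⟨hf1, hg1⟩
  · -- (L, L)
    obtain ⟨δ, hδ0, hδe, hδp⟩ := key _ _ natDegree_linear_le natDegree_linear_le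
      (lin_u_ne_zero hdet0) (by rw [← hf1, hf0])
    obtain ⟨δ', hδ'0, hδ'e, hδ'p⟩ := key _ _ natDegree_linear_le natDegree_linear_le
      (lin_v_ne_zero hdet0) (by rw [← hg1, hg0])
    obtain ⟨e1a, e1b⟩ := linear_eq_linear hδe
    obtain ⟨e2c, e2d⟩ := linear_eq_linear hδ'e
    exact ⟨δ', δ * δ'⁻¹, D, hδ'0, by omega, hmupow δ δ' hδp hδ'p,
      Or.inl ⟨e1a.trans (scale_helper hδ'0), e1b.trans (scale_helper hδ'0), e2c, e2d⟩⟩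
  · -- (L, R) : f = Cβ₁ v1^D, g = Cβ₁ u1^D
    obtain ⟨δ, hδ0, hδe, hδp⟩ := key _ _ natDegree_linear_le natDegree_linear_le
      (lin_u_ne_zero hdet0) (by rw [← hf1, hf0])
    obtain ⟨δ', hδ'0, hδ'e, hδ'p⟩ := key _ _ natDegree_linear_le natDegree_linear_le
      (lin_v_ne_zero hdet0) (by rw [← hg1, hg0])
    obtain ⟨e1c, e1d⟩ := linear_eq_linear hδe   -- c1 = δ * a0, d1 = δ * b0
    obtain ⟨e2a, e2b⟩ := linear_eq_linear hδ'e  -- a1 = δ' * c0, b1 = δ' * d0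
    exact ⟨δ, δ' * δ⁻¹, D, hδ0, by omega, hmupow δ' δ hδ'p hδp,
      Or.inr ⟨e2a.trans (scale_helper hδ0), e2b.trans (scale_helper hδ0), e1c, e1d⟩⟩
  · -- (R, L) : f = Cβ₀ v0^D, g = Cβ₀ u0^D ; f = Cβ₁ u1^D, g = Cβ₁ v1^D
    obtain ⟨δ, hδ0, hδe, hδp⟩ := key _ _ natDegree_linear_le natDegree_linear_le
      (lin_v_ne_zero hdet0) (by rw [← hf1, hf0])
    obtain ⟨δ', hδ'0, hδ'e, hδ'p⟩ := key _ _ natDegree_linear_le natDegree_linear_le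
      (lin_u_ne_zero hdet0) (by rw [← hg1, hg0])
    obtain ⟨e1a, e1b⟩ := linear_eq_linear hδe   -- a1 = δ * c0, b1 = δ * d0
    obtain ⟨e2c, e2d⟩ := linear_eq_linear hδ'e  -- c1 = δ' * a0, d1 = δ' * b0
    exact ⟨δ', δ * δ'⁻¹, D, hδ'0, by omega, hmupow δ δ' hδp hδ'p,
      Or.inr ⟨e1a.trans (scale_helper hδ'0), e1b.trans (scale_helper hδ'0), e2c, e2d⟩⟩
  · -- (R, R)
    obtain ⟨δ, hδ0, hδe, hδp⟩ := key _ _ natDegree_linear_le natDegree_linear_le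
      (lin_v_ne_zero hdet0) (by rw [← hf1, hf0])
    obtain ⟨δ', hδ'0, hδ'e, hδ'p⟩ := key _ _ natDegree_linear_le natDegree_linear_le
      (lin_u_ne_zero hdet0) (by rw [← hg1, hg0])
    obtain ⟨e1c, e1d⟩ := linear_eq_linear hδe   -- c1 = δ * c0, d1 = δ * d0
    obtain ⟨e2a, e2b⟩ := linear_eq_linear hδ'e  -- a1 = δ' * a0, b1 = δ' * b0
    exact ⟨δ, δ' * δ⁻¹, D, hδ0, by omega, hmupow δ' δ hδ'p hδp,
      Or.inl ⟨e2a.trans (scale_helper hδ0), e2b.trans (scale_helper hδ0), e1c, e1d⟩⟩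


end AuxLemmas3

theorem stmt9 {F : Type*} [Field F] (l : ℕ) (hl : l.Prime) (hl5 : 5 ≤ l)
    (hirr : Irreducible (∑ i ∈ Finset.range l, (X : Polynomial F) ^ i))
    (f g : Polynomial F) (hfg : IsCoprime f g)
    (hθ : 1 ≤ max f.natDegree g.natDegree)
    (α : F) (hα : α ≠ 0) (Ψ : Polynomial F) (hΨ : Ψ ≠ 0)
    (n : ℕ) (hn1 : 1 ≤ n)
    (a b c d : Fin n → F) (hdet : ∀ i, a i * d i - b i * c i ≠ 0)
    (hed : ∀ i j, i ≠ j →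
      EssDistinct (a i) (b i) (c i) (d i) (a j) (b j) (c j) (d j))
    (r : Fin n → ℕ) (hr : ∀ i, 1 ≤ r i)
    (heq : PhiH l f g = C α * Ψ ^ l *
      ∏ i, (PhiH l (C (a i) * X + C (b i)) (C (c i) * X + C (d i))) ^ r i)
    (hder : derivative f ≠ 0 ∨ derivative g ≠ 0)
    (hn2 : 2 ≤ n) (hn : 2 * n ≤ l ^ 2 - 4 * l + 1)
    (hdvd : ∀ i, ∃ m : ℕ, 1 ≤ m ∧ m ≤ l - 1 ∧
      PhiH l (C (a i) * X + C (b i)) (C (c i) * X + C (d i)) ∣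
        f * (C (c i) * X + C (d i)) ^ m - g * (C (a i) * X + C (b i)) ^ m) :
    l ≤ 2 * n + 1 := by
  
  classical
  by_contra hcon
  push_neg at hcon
  have hodd : Odd l := hl.odd_of_ne_two (by omega)
  obtain ⟨w0, hw0⟩ := hodd
  have hl3 : 2 * n + 3 ≤ l := by omega
  have hf : f ≠ 0 := by
    rintro rfl
    rw [isCoprime_zero_left] at hfg
    have h0 := natDegree_eq_zero_of_isUnit hfg
    simp [h0] at hθ
  have hg : g ≠ 0 := by
    rintro rfl
    rw [isCoprime_zero_right] at hfg
    have h0 := natDegree_eq_zero_of_isUnit hfg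
    simp [h0] at hθ
  set D := max f.natDegree g.natDegree with hD
  have hD1 : 1 ≤ D := hθ
  have hPdeg : ∀ i, (PhiH l (C (a i) * X + C (b i)) (C (c i) * X + C (d i))).natDegree = l - 1 :=
    fun i => natDegree_P hl5 hirr (hdet i)
  have hP0 : ∀ i, PhiH l (C (a i) * X + C (b i)) (C (c i) * X + C (d i)) ≠ 0 :=
    fun i => P_ne_zero hl5 hirr (hdet i)
  by_cases hDcase : l ≤ 2 * D + 2
  · -- Step 4: Wronskian/radical estimate gives a contradiction
    have hl2D1 : l ≤ 2 * D + 1 := by omega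
    have hPhideg : (PhiH l f g).natDegree = (l - 1) * D := natDegree_PhiH hl5 hirr hf hg
    have hPhi0 : PhiH l f g ≠ 0 := by
      intro h0
      rw [h0, natDegree_zero] at hPhideg
      rcases Nat.mul_eq_zero.mp hPhideg.symm with h | h <;> omega
    set S := ∑ i, r i with hS_def
    have hSn : n ≤ S := by
      rw [hS_def]
      calc n = ∑ _i : Fin n, 1 := by simp
        _ ≤ ∑ i, r i := Finset.sum_le_sum fun i _ => hr i
    have hprodne : (∏ i, (PhiH l (C (a i) * X + C (b i)) (C (c i) * X + C (d i))) ^ r i) ≠ 0 :=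
      Finset.prod_ne_zero_iff.mpr fun i _ => pow_ne_zero _ (hP0 i)
    have hdegeq : (l - 1) * D = l * Ψ.natDegree + S * (l - 1) := by
      have h1 := congrArg natDegree heq
      rw [hPhideg, natDegree_mul (mul_ne_zero (C_ne_zero.mpr hα) (pow_ne_zero _ hΨ)) hprodne,
        natDegree_mul (C_ne_zero.mpr hα) (pow_ne_zero _ hΨ), natDegree_C, natDegree_pow,
        natDegree_prod _ _ (fun i _ => pow_ne_zero _ (hP0 i))] at h1
      have h2 : (∑ i, ((PhiH l (C (a i) * X + C (b i)) (C (c i) * X + C (d i))) ^ r i).natDegree)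
          = S * (l - 1) := by
        rw [Finset.sum_congr rfl (fun i _ => by rw [natDegree_pow, hPdeg i]), ← Finset.sum_mul,
          hS_def]
      rw [h2, zero_add] at h1
      exact h1
    have hfg_ne : f - g ≠ 0 := by
      refine sub_ne_zero.mpr fun hEq => ?_
      have hunit : IsUnit f := isCoprime_self.mp (by rw [hEq] at hfg ⊢; exact hEq ▸ hfg)
      have h1 := natDegree_eq_zero_of_isUnit hunit
      have h2 : g.natDegree = 0 := by rw [← hEq]; exact h1
      omega
    have hG0 : f ^ l - g ^ l ≠ 0 := by
      have h1 : PhiH l f g * (f - g) ≠ 0 := mul_ne_zero hPhi0 hfg_ne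
      rwa [PhiH_mul_sub] at h1
    have hchar : (l : F) ≠ 0 := by
      intro h0
      apply no_root hl5 hirr (1 : F)
      simp [h0]
    have hW0 : wronskian f g ≠ 0 := by
      intro h0
      rcases hder with h | h
      · exact h (hfg.wronskian_eq_zero_iff.mp h0).1
      · exact h (hfg.wronskian_eq_zero_iff.mp h0).2
    have hwcalc : wronskian (f ^ l - g ^ l) (f ^ l)
        = C (l : F) * ((f * g) ^ (l - 1) * wronskian f g) := by
      obtain ⟨k, hk⟩ : ∃ k, l = k + 1 := ⟨l - 1, by omega⟩
      rw [hk]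
      simp only [Nat.add_sub_cancel, wronskian, derivative_sub, derivative_pow,
        Nat.cast_add, Nat.cast_one]
      ring
    have hGf : IsCoprime (f ^ l - g ^ l) f := by
      have h1 : IsCoprime (-(g ^ l)) f := (hfg.symm.pow_left).neg_left
      have h2 := h1.add_mul_left_left (f ^ (l - 1))
      have h3 : -(g ^ l) + f * f ^ (l - 1) = f ^ l - g ^ l := by
        have hfl : f * f ^ (l - 1) = f ^ l := by
          rw [← pow_succ']
          congr 1
          omega
        rw [hfl]; ring
      rwa [h3] at h2
    have hGg : IsCoprime (f ^ l - g ^ l) g := by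
      have h1 : IsCoprime (f ^ l) g := hfg.pow_left
      have h2 := h1.add_mul_left_left (-(g ^ (l - 1)))
      have h3 : f ^ l + g * -(g ^ (l - 1)) = f ^ l - g ^ l := by
        have hgl : g * g ^ (l - 1) = g ^ l := by
          rw [← pow_succ']
          congr 1
          omega
        rw [mul_neg, hgl]; ring
      rwa [h3] at h2
    have hdr1 : divRadical (f ^ l - g ^ l) ∣ wronskian f g := by
      have h1 := divRadical_dvd_wronskian_left (f ^ l - g ^ l) (f ^ l)
      rw [hwcalc] at h1
      have h3 : divRadical (f ^ l - g ^ l) ∣ (f * g) ^ (l - 1) * wronskian f g := by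
        have h2 : (f * g) ^ (l - 1) * wronskian f g
            = C ((l : F)⁻¹) * (C (l : F) * ((f * g) ^ (l - 1) * wronskian f g)) := by
          rw [← mul_assoc, ← C_mul, inv_mul_cancel₀ hchar, C_1, one_mul]
        rw [h2]
        exact h1.mul_left _
      exact (((hGf.mul_right hGg).of_isCoprime_of_dvd_left
        (divRadical_dvd_self _)).pow_right).dvd_of_dvd_mul_left h3
    have hdrW : (divRadical (f ^ l - g ^ l)).natDegree ≤ (wronskian f g).natDegree :=
      natDegree_le_of_dvd hdr1 hW0
    have hWdeg : (wronskian f g).natDegree < f.natDegree + g.natDegree :=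
      natDegree_wronskian_lt_add hW0
    have hkey : (l - 1) * D + (f - g).natDegree
        = (divRadical (f ^ l - g ^ l)).natDegree + (radical (f ^ l - g ^ l)).natDegree := by
      rw [← natDegree_mul (divRadical_ne_zero hG0) radical_ne_zero, divRadical_mul_radical,
        ← PhiH_mul_sub l f g, natDegree_mul hPhi0 hfg_ne, hPhideg]
    have hradb : (radical (f ^ l - g ^ l)).natDegree
        ≤ (f - g).natDegree + Ψ.natDegree + n * (l - 1) := by
      have hprodne2 : (∏ i, PhiH l (C (a i) * X + C (b i)) (C (c i) * X + C (d i))) ≠ 0 :=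
        Finset.prod_ne_zero_iff.mpr fun i _ => hP0 i
      have hzr1 : C α * (f - g) ≠ 0 := mul_ne_zero (C_ne_zero.mpr hα) hfg_ne
      have hzr2 : Ψ ^ l * ∏ i, (PhiH l (C (a i) * X + C (b i)) (C (c i) * X + C (d i))) ^ r i ≠ 0 :=
        mul_ne_zero (pow_ne_zero _ hΨ) hprodne
      have e1 : f ^ l - g ^ l = (C α * (f - g)) *
          (Ψ ^ l * ∏ i, (PhiH l (C (a i) * X + C (b i)) (C (c i) * X + C (d i))) ^ r i) := by
        rw [← PhiH_mul_sub l f g, heq]; ring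
      have hd1 : radical (f ^ l - g ^ l) ∣ (C α * (f - g)) *
          (Ψ * ∏ i, PhiH l (C (a i) * X + C (b i)) (C (c i) * X + C (d i))) := by
        calc radical (f ^ l - g ^ l)
            ∣ radical (C α * (f - g)) *
              radical (Ψ ^ l * ∏ i, (PhiH l (C (a i) * X + C (b i)) (C (c i) * X + C (d i))) ^ r i) := by
              rw [e1]; exact radical_mul_dvd' hzr1 hzr2
          _ ∣ (C α * (f - g)) *
              (Ψ * ∏ i, PhiH l (C (a i) * X + C (b i)) (C (c i) * X + C (d i))) := by
              refine mul_dvd_mul radical_dvd_self ?_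
              calc radical (Ψ ^ l * ∏ i, (PhiH l (C (a i) * X + C (b i)) (C (c i) * X + C (d i))) ^ r i)
                  ∣ radical (Ψ ^ l) *
                    radical (∏ i, (PhiH l (C (a i) * X + C (b i)) (C (c i) * X + C (d i))) ^ r i) :=
                    radical_mul_dvd' (pow_ne_zero _ hΨ) hprodne
                _ ∣ Ψ * ∏ i, PhiH l (C (a i) * X + C (b i)) (C (c i) * X + C (d i)) := by
                    refine mul_dvd_mul ?_ ?_
                    · rw [radical_pow _ (by omega : l ≠ 0)]
                      exact radical_dvd_self
                    · calc radical (∏ i, (PhiH l (C (a i) * X + C (b i)) (C (c i) * X + C (d i))) ^ r i)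
                          ∣ ∏ i, radical ((PhiH l (C (a i) * X + C (b i)) (C (c i) * X + C (d i))) ^ r i) :=
                          radical_prod_dvd (fun i _ => pow_ne_zero _ (hP0 i))
                        _ ∣ ∏ i, PhiH l (C (a i) * X + C (b i)) (C (c i) * X + C (d i)) := by
                          refine Finset.prod_dvd_prod_of_dvd _ _ (fun i _ => ?_)
                          rw [radical_pow _ (Nat.one_le_iff_ne_zero.mp (hr i))]
                          exact radical_dvd_self
      have hne2 : (C α * (f - g)) *
          (Ψ * ∏ i, PhiH l (C (a i) * X + C (b i)) (C (c i) * X + C (d i))) ≠ 0 :=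
        mul_ne_zero hzr1 (mul_ne_zero hΨ hprodne2)
      have hb := natDegree_le_of_dvd hd1 hne2
      have hdeg2 : ((C α * (f - g)) *
          (Ψ * ∏ i, PhiH l (C (a i) * X + C (b i)) (C (c i) * X + C (d i)))).natDegree
          = (f - g).natDegree + Ψ.natDegree + n * (l - 1) := by
        rw [natDegree_mul hzr1 (mul_ne_zero hΨ hprodne2),
          natDegree_mul (C_ne_zero.mpr hα) hfg_ne, natDegree_C,
          natDegree_mul hΨ hprodne2, natDegree_prod _ _ (fun i _ => hP0 i),
          Finset.sum_congr rfl (fun i _ => hPdeg i), Finset.sum_const, Finset.card_univ,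
          Fintype.card_fin, smul_eq_mul]
        omega
      omega
    have hfn : f.natDegree ≤ D := le_max_left _ _
    have hgn : g.natDegree ≤ D := le_max_right _ _
    have hIneq : (l - 1) * D + 1 ≤ 2 * D + Ψ.natDegree + n * (l - 1) := by
      set A := (l - 1) * D with hA
      set B := n * (l - 1) with hB
      omega
    -- Now cast to ℤ and derive the contradiction
    have hlZ : (5 : ℤ) ≤ (l : ℤ) := by exact_mod_cast hl5
    have hq : (0 : ℤ) ≤ (l : ℤ) * (l : ℤ) - 4 * (l : ℤ) + 1 := by
      have h5 : (l : ℤ) * 5 ≤ (l : ℤ) * (l : ℤ) := mul_le_mul_of_nonneg_left hlZ (by linarith)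
      linarith
    have c1 : ((l : ℤ) - 1) * (D : ℤ) = (l : ℤ) * (Ψ.natDegree : ℤ) + (S : ℤ) * ((l : ℤ) - 1) := by
      have h1 := hdegeq
      zify [show 1 ≤ l by omega] at h1
      exact h1
    have c2 : ((l : ℤ) - 1) * (D : ℤ) + 1
        ≤ 2 * (D : ℤ) + (Ψ.natDegree : ℤ) + (n : ℤ) * ((l : ℤ) - 1) := by
      have h1 := hIneq
      zify [show 1 ≤ l by omega] at h1
      exact h1
    have c3 : (n : ℤ) ≤ (S : ℤ) := by exact_mod_cast hSn
    have c4 : 2 * (n : ℤ) + 3 ≤ (l : ℤ) := by exact_mod_cast hl3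
    have c5 : (l : ℤ) ≤ 2 * (D : ℤ) + 1 := by exact_mod_cast hl2D1
    have c7 : (1 : ℤ) ≤ (D : ℤ) := by exact_mod_cast hD1
    have c8 : (0 : ℤ) ≤ (Ψ.natDegree : ℤ) := Int.natCast_nonneg _
    have m1 : (l : ℤ) * (((l : ℤ) - 1) * (D : ℤ) + 1)
        ≤ (l : ℤ) * (2 * (D : ℤ) + (Ψ.natDegree : ℤ) + (n : ℤ) * ((l : ℤ) - 1)) :=
      mul_le_mul_of_nonneg_left c2 (by linarith)
    have m2 : ((l : ℤ) - 1) * (n : ℤ) ≤ ((l : ℤ) - 1) * (S : ℤ) :=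
      mul_le_mul_of_nonneg_left c3 (by linarith)
    have m3 : ((l : ℤ) * (l : ℤ) - 4 * (l : ℤ) + 1) * ((l : ℤ) - 1)
        ≤ ((l : ℤ) * (l : ℤ) - 4 * (l : ℤ) + 1) * (2 * (D : ℤ)) :=
      mul_le_mul_of_nonneg_left (by linarith) hq
    have m4 : (2 * (n : ℤ)) * (((l : ℤ) - 1) * ((l : ℤ) - 1))
        ≤ ((l : ℤ) - 3) * (((l : ℤ) - 1) * ((l : ℤ) - 1)) :=
      mul_le_mul_of_nonneg_right (by linarith) (mul_self_nonneg _)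
    have k1 : ((l : ℤ) * (l : ℤ) - 4 * (l : ℤ) + 1) * (D : ℤ) + ((l : ℤ) - 1) * (S : ℤ) + (l : ℤ)
        ≤ (l : ℤ) * ((n : ℤ) * ((l : ℤ) - 1)) := by linarith only [m1, c1]
    have k2 : ((l : ℤ) * (l : ℤ) - 4 * (l : ℤ) + 1) * (D : ℤ) + (l : ℤ)
        ≤ (n : ℤ) * (((l : ℤ) - 1) * ((l : ℤ) - 1)) := by linarith only [k1, m2]
    linarith only [k2, m3, m4]
  · -- Step 3: rigidity forces essentially equal matrices
    have hl2D : 2 * D + 3 ≤ l := by omega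
    have hbranch : ∀ i : Fin n, ∃ β : F, β ≠ 0 ∧
        ((f = C β * (C (a i) * X + C (b i)) ^ D ∧ g = C β * (C (c i) * X + C (d i)) ^ D) ∨
         (f = C β * (C (c i) * X + C (d i)) ^ D ∧ g = C β * (C (a i) * X + C (b i)) ^ D)) := by
      intro i
      obtain ⟨m, hm1, hm2, hPd⟩ := hdvd i
      exact branch_lemma hl5 hirr hfg hf hg (hdet i) hm1 hm2 hPd hl2D
    have hne01 : (⟨0, by omega⟩ : Fin n) ≠ (⟨1, by omega⟩ : Fin n) := by
      intro h0
      have := congrArg Fin.val h0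
      simp at this
    obtain ⟨β₀, hβ₀, hc0⟩ := hbranch ⟨0, by omega⟩
    obtain ⟨β₁, hβ₁, hc1⟩ := hbranch ⟨1, by omega⟩
    exact hed _ _ hne01 (pair_lemma hD1 (hdet ⟨0, by omega⟩) (hdet ⟨1, by omega⟩) hβ₀ hβ₁ hc0 hc1)
end

section
/- Let l ≥ 5 be a prime and F a field such that the l-th cyclotomic polynomial Φ_l(X) is irreducible in F[x]. Assume the standing factorization hypothesis, assume that the formal derivative f′ ≠ 0 or g′ ≠ 0, and assume n ≤ (l² − 4l + 1)/2. Then θ := max(deg f, deg g) satisfies θ ≤ 2n − 1. -/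
open Polynomial

section Aux

open UniqueFactorizationMonoid UniqueFactorizationDomain

variable {F : Type*} [Field F]

/-- The geometric-sum polynomial has no roots in `F` if it is irreducible (for `l ≥ 5`). -/
lemma aux_no_root {l : ℕ} (hl5 : 5 ≤ l)
    (hirr : Irreducible (∑ i ∈ Finset.range l, (X : Polynomial F) ^ i)) (u : F) :
    ∑ i ∈ Finset.range l, u ^ i ≠ 0 := by
  intro h
  set P : Polynomial F := ∑ i ∈ Finset.range l, (X : Polynomial F) ^ i with hP
  have hdegP : P.natDegree = l - 1 := by
    have hle : P.natDegree ≤ l - 1 := by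
      apply Polynomial.natDegree_sum_le_of_forall_le
      intro i hi
      simp only [natDegree_X_pow]
      have := Finset.mem_range.mp hi
      omega
    have hcoeff : P.coeff (l - 1) = 1 := by
      rw [hP, Polynomial.finset_sum_coeff]
      rw [Finset.sum_eq_single (l - 1)]
      · simp
      · intro i hi hne
        rw [Polynomial.coeff_X_pow]
        simp only [ite_eq_right_iff]; intro hh; omega
      · intro hmem
        exfalso; apply hmem; simp; omega
    have := Polynomial.le_natDegree_of_ne_zero (by rw [hcoeff]; exact one_ne_zero : P.coeff (l-1) ≠ 0)
    omega
  have hroot : P.IsRoot u := by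
    simp only [Polynomial.IsRoot, hP, Polynomial.eval_finset_sum, Polynomial.eval_pow,
      Polynomial.eval_X]
    exact h
  obtain ⟨v, hv⟩ := Polynomial.dvd_iff_isRoot.mpr hroot
  rcases hirr.isUnit_or_isUnit hv with h1 | h2
  · exact Polynomial.not_isUnit_X_sub_C u h1
  · have hv0 : v ≠ 0 := by
      intro h0; rw [h0, mul_zero] at hv
      rw [hv] at hdegP; simp at hdegP; omega
    have : P.natDegree = 1 := by
      rw [hv, Polynomial.natDegree_mul (Polynomial.X_sub_C_ne_zero u) hv0,
        Polynomial.natDegree_X_sub_C, Polynomial.natDegree_eq_zero_of_isUnit h2]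
    omega

lemma aux_scalar_ne {l : ℕ} (hl : 1 ≤ l)
    (hroot : ∀ u : F, ∑ i ∈ Finset.range l, u ^ i ≠ 0)
    {A B : F} (hAB : A ≠ 0 ∨ B ≠ 0) :
    ∑ j ∈ Finset.range l, A ^ j * B ^ (l - 1 - j) ≠ 0 := by
  by_cases hB : B = 0
  · have hA : A ≠ 0 := by tauto
    rw [Finset.sum_eq_single (l - 1)]
    · simp [hB, pow_ne_zero, hA]
    · intro i hi hne
      have hi' := Finset.mem_range.mp hi
      rw [hB, zero_pow (by omega : l - 1 - i ≠ 0), mul_zero]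
    · intro hmem; exfalso; apply hmem; exact Finset.mem_range.mpr (by omega)
  · have key : ∀ j ∈ Finset.range l, A ^ j * B ^ (l - 1 - j) = B ^ (l-1) * (A * B⁻¹) ^ j := by
      intro j hj
      have hj' := Finset.mem_range.mp hj
      have hsplit : B ^ (l-1) = B ^ (l-1-j) * B ^ j := by
        rw [← pow_add]; congr 1; omega
      rw [mul_pow, hsplit]
      field_simp
      rw [mul_assoc, ← mul_pow, mul_one_div_cancel hB, one_pow, mul_one]
    rw [Finset.sum_congr rfl key, ← Finset.mul_sum]
    exact mul_ne_zero (pow_ne_zero _ hB) (hroot _)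

lemma aux_phiH_deg {l : ℕ} (hl : 1 ≤ l)
    (hroot : ∀ u : F, ∑ i ∈ Finset.range l, u ^ i ≠ 0)
    {p q : Polynomial F} (h : p ≠ 0 ∨ q ≠ 0) :
    PhiH l p q ≠ 0 ∧
      (PhiH l p q).natDegree = (l - 1) * max p.natDegree q.natDegree := by
  set θ := max p.natDegree q.natDegree with hθdef
  have hpθ : p.natDegree ≤ θ := le_max_left _ _
  have hqθ : q.natDegree ≤ θ := le_max_right _ _
  have hAB : p.coeff θ ≠ 0 ∨ q.coeff θ ≠ 0 := by
    by_cases hp : p = 0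
    · have hq : q ≠ 0 := by tauto
      right
      have : θ = q.natDegree := by simp [hθdef, hp]
      rw [this]; exact mt leadingCoeff_eq_zero.mp hq
    · by_cases hq : q = 0
      · left
        have : θ = p.natDegree := by simp [hθdef, hq]
        rw [this]; exact mt leadingCoeff_eq_zero.mp hp
      · rcases max_choice p.natDegree q.natDegree with hc | hc
        · left; rw [hθdef, hc]; exact mt leadingCoeff_eq_zero.mp hp
        · right; rw [hθdef, hc]; exact mt leadingCoeff_eq_zero.mp hq
  have hcoeff : (PhiH l p q).coeff ((l - 1) * θ) =
      ∑ j ∈ Finset.range l, (p.coeff θ) ^ j * (q.coeff θ) ^ (l - 1 - j) := by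
    rw [PhiH, Polynomial.finset_sum_coeff]
    apply Finset.sum_congr rfl
    intro j hj
    have hj' := Finset.mem_range.mp hj
    have hsplit : (l - 1) * θ = j * θ + (l - 1 - j) * θ := by
      rw [← add_mul]; congr 1; omega
    rw [hsplit, Polynomial.coeff_mul_add_eq_of_natDegree_le
        ((Polynomial.natDegree_pow_le).trans (Nat.mul_le_mul_left j hpθ))
        ((Polynomial.natDegree_pow_le).trans (Nat.mul_le_mul_left _ hqθ)),
      Polynomial.coeff_pow_of_natDegree_le hpθ, Polynomial.coeff_pow_of_natDegree_le hqθ]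
  have hne : (PhiH l p q).coeff ((l - 1) * θ) ≠ 0 := by
    rw [hcoeff]; exact aux_scalar_ne hl hroot hAB
  constructor
  · intro h0; rw [h0] at hne; simp at hne
  · apply le_antisymm
    · apply Polynomial.natDegree_sum_le_of_forall_le
      intro j hj
      have hj' := Finset.mem_range.mp hj
      calc (p ^ j * q ^ (l - 1 - j)).natDegree ≤ (p^j).natDegree + (q^(l-1-j)).natDegree :=
            Polynomial.natDegree_mul_le
        _ ≤ j * θ + (l - 1 - j) * θ :=
            Nat.add_le_add ((Polynomial.natDegree_pow_le).trans (Nat.mul_le_mul_left j hpθ))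
              ((Polynomial.natDegree_pow_le).trans (Nat.mul_le_mul_left _ hqθ))
        _ ≤ (l - 1) * θ := by rw [← add_mul]; exact Nat.mul_le_mul_right θ (by omega)
    · exact Polynomial.le_natDegree_of_ne_zero hne

variable {R : Type*} [CommRing R] [IsDomain R] [NormalizationMonoid R]
  [UniqueFactorizationMonoid R]

lemma aux_radical_mul_dvd {a b : R} (ha : a ≠ 0) (hb : b ≠ 0) :
    radical (a * b) ∣ radical a * radical b := by
  classical
  have hsub : primeFactors (a * b) ⊆ primeFactors a ∪ primeFactors b := by
    intro p hp
    rw [primeFactors, Multiset.mem_toFinset] at hp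
    have hprime := prime_of_normalized_factor p hp
    have hdvd := dvd_of_mem_normalizedFactors hp
    have hnp := normalize_normalized_factor p hp
    rcases hprime.2.2 a b hdvd with hda | hdb
    · obtain ⟨q, hq, hassoc⟩ :=
        exists_mem_normalizedFactors_of_dvd ha hprime.irreducible hda
      have : p = q :=
        hassoc.eq_of_normalized hnp (normalize_normalized_factor q hq)
      apply Finset.mem_union_left
      rw [primeFactors, Multiset.mem_toFinset, this]; exact hq
    · obtain ⟨q, hq, hassoc⟩ :=
        exists_mem_normalizedFactors_of_dvd hb hprime.irreducible hdb
      have : p = q :=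
        hassoc.eq_of_normalized hnp (normalize_normalized_factor q hq)
      apply Finset.mem_union_right
      rw [primeFactors, Multiset.mem_toFinset, this]; exact hq
  calc radical (a * b) ∣ ∏ p ∈ primeFactors a ∪ primeFactors b, p := by
        rw [radical]
        simpa using Finset.prod_dvd_prod_of_subset _ _ id hsub
    _ ∣ radical a * radical b := by
        rw [← Finset.union_sdiff_self_eq_union, Finset.prod_union Finset.disjoint_sdiff]
        apply mul_dvd_mul
        · rw [radical]; simp
        · rw [radical]
          simpa using Finset.prod_dvd_prod_of_subset _ _ id Finset.sdiff_subset

lemma aux_radical_prod_dvd {ι : Type*} {s : Finset ι} {h : ι → R}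
    (hne : ∀ i ∈ s, h i ≠ 0) :
    radical (∏ i ∈ s, h i) ∣ ∏ i ∈ s, radical (h i) := by
  classical
  induction s using Finset.induction_on with
  | empty => simp [radical_one]
  | @insert x s hxs ih =>
    rw [Finset.prod_insert hxs, Finset.prod_insert hxs]
    have h1 : h x ≠ 0 := hne x (Finset.mem_insert_self _ _)
    have h2 : ∏ i ∈ s, h i ≠ 0 :=
      Finset.prod_ne_zero_iff.mpr fun i hi => hne i (Finset.mem_insert_of_mem hi)
    exact (aux_radical_mul_dvd h1 h2).trans
      (mul_dvd_mul_left _ (ih fun i hi => hne i (Finset.mem_insert_of_mem hi)))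

end Aux

open UniqueFactorizationMonoid UniqueFactorizationDomain

set_option maxHeartbeats 1000000 in
theorem stmt10 {F : Type*} [Field F] (l : ℕ) (hl : l.Prime) (hl5 : 5 ≤ l)
    (hirr : Irreducible (∑ i ∈ Finset.range l, (X : Polynomial F) ^ i))
    (f g : Polynomial F) (hfg : IsCoprime f g)
    (hθ : 1 ≤ max f.natDegree g.natDegree)
    (α : F) (hα : α ≠ 0) (Ψ : Polynomial F) (hΨ : Ψ ≠ 0)
    (n : ℕ) (hn1 : 1 ≤ n)
    (a b c d : Fin n → F) (hdet : ∀ i, a i * d i - b i * c i ≠ 0)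
    (hed : ∀ i j, i ≠ j →
      EssDistinct (a i) (b i) (c i) (d i) (a j) (b j) (c j) (d j))
    (r : Fin n → ℕ) (hr : ∀ i, 1 ≤ r i)
    (heq : PhiH l f g = C α * Ψ ^ l *
      ∏ i, (PhiH l (C (a i) * X + C (b i)) (C (c i) * X + C (d i))) ^ r i)
    (hder : derivative f ≠ 0 ∨ derivative g ≠ 0)
    (hn : 2 * n ≤ l ^ 2 - 4 * l + 1) :
    max f.natDegree g.natDegree ≤ 2 * n - 1 := by
  classical
  set θ := max f.natDegree g.natDegree with hθdef
  have hl1 : 1 ≤ l := by omega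
  have hroot := aux_no_root hl5 hirr
  -- char F does not divide l
  have hlF : (l : F) ≠ 0 := by
    have := hroot 1
    simpa using this
  -- f, g, f - g nonzero
  have hf0 : f ≠ 0 := by
    intro h0
    rw [h0] at hfg
    have := Polynomial.natDegree_eq_zero_of_isUnit (isCoprime_zero_left.mp hfg)
    rw [hθdef] at hθ; rw [h0] at hθ; simp [this] at hθ
  have hg0 : g ≠ 0 := by
    intro h0
    rw [h0] at hfg
    have := Polynomial.natDegree_eq_zero_of_isUnit (isCoprime_zero_right.mp hfg)
    rw [hθdef] at hθ; rw [h0] at hθ; simp [this] at hθ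
  have hfmg : f - g ≠ 0 := by
    intro h0
    have hfe : f = g := by linear_combination (norm := ring_nf) h0
    have hu : IsUnit f := hfg.isUnit_of_dvd' dvd_rfl (by rw [hfe])
    have h1 := Polynomial.natDegree_eq_zero_of_isUnit hu
    have h2 : g.natDegree = 0 := by rw [← hfe]; exact h1
    rw [hθdef, h1, h2] at hθ; simp at hθ
  -- the degree of `PhiH l f g`
  obtain ⟨hPhine, hPhideg⟩ := aux_phiH_deg (q := g) hl1 hroot (Or.inl hf0)
  -- degrees of the linear-fraction factors
  set Φ : Fin n → Polynomial F :=
    fun i => PhiH l (C (a i) * X + C (b i)) (C (c i) * X + C (d i)) with hΦdef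
  have hΦfacts : ∀ i, Φ i ≠ 0 ∧ (Φ i).natDegree = l - 1 := by
    intro i
    have hac : a i ≠ 0 ∨ c i ≠ 0 := by
      by_contra hcon
      push_neg at hcon
      apply hdet i
      rw [hcon.1, hcon.2]; ring
    have hone : max (C (a i) * X + C (b i)).natDegree (C (c i) * X + C (d i)).natDegree = 1 := by
      apply le_antisymm
      · exact max_le Polynomial.natDegree_linear_le Polynomial.natDegree_linear_le
      · rcases hac with h1 | h1
        · exact le_trans (le_of_eq (Polynomial.natDegree_linear h1).symm) (le_max_left _ _)
        · exact le_trans (le_of_eq (Polynomial.natDegree_linear h1).symm) (le_max_right _ _)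
    have hne : (C (a i) * X + C (b i)) ≠ 0 ∨ (C (c i) * X + C (d i)) ≠ 0 := by
      rcases hac with h1 | h1
      · left; intro h0
        have := Polynomial.natDegree_linear (a := a i) (b := b i) h1
        rw [h0] at this; simp at this
      · right; intro h0
        have := Polynomial.natDegree_linear (a := c i) (b := d i) h1
        rw [h0] at this; simp at this
    obtain ⟨hne', hdeg'⟩ := aux_phiH_deg hl1 hroot hne
    exact ⟨hne', by rw [hdeg', hone, mul_one]⟩
  -- degree identity from the factorization
  set R := ∑ i, r i with hRdef
  set dΨ := Ψ.natDegree with hdΨdef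
  have hE : (l - 1) * θ = l * dΨ + R * (l - 1) := by
    have h1 : (PhiH l f g).natDegree =
        (C α * Ψ ^ l * ∏ i, (Φ i) ^ r i).natDegree := by rw [heq]
    rw [hPhideg] at h1
    rw [Polynomial.natDegree_mul (mul_ne_zero (Polynomial.C_ne_zero.mpr hα)
        (pow_ne_zero _ hΨ)) (Finset.prod_ne_zero_iff.mpr
          fun i _ => pow_ne_zero _ (hΦfacts i).1),
      Polynomial.natDegree_mul (Polynomial.C_ne_zero.mpr hα) (pow_ne_zero _ hΨ),
      Polynomial.natDegree_C, Polynomial.natDegree_pow,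
      Polynomial.natDegree_prod _ _ (fun i _ => pow_ne_zero _ (hΦfacts i).1)] at h1
    simp only [Polynomial.natDegree_pow] at h1
    have h2 : ∑ i, r i * (Φ i).natDegree = R * (l - 1) := by
      rw [hRdef, Finset.sum_mul]
      exact Finset.sum_congr rfl fun i _ => by rw [(hΦfacts i).2]
    rw [h2, ← hθdef, ← hdΨdef] at h1
    linarith [h1]
  -- R ≥ n
  have hRn : n ≤ R := by
    calc n = ∑ _i : Fin n, 1 := by simp
      _ ≤ R := Finset.sum_le_sum fun i _ => hr i
  -- geometric sum identity
  have hgeom : (PhiH l f g) * (f - g) = f ^ l - g ^ l := by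
    rw [PhiH]; exact geom_sum₂_mul f g l
  -- coprimality of f - g and PhiH l f g
  have hC1 : IsCoprime (f - g) f := by
    have := (hfg.symm.neg_left).add_mul_right_left 1
    rwa [one_mul, neg_add_eq_sub] at this
  have hdvdPhi : f - g ∣ PhiH l f g - C (l : F) * f ^ (l - 1) := by
    have hconst : ∑ j ∈ Finset.range l, f ^ j * f ^ (l - 1 - j) = C (l : F) * f ^ (l - 1) := by
      have hterm : ∀ j ∈ Finset.range l, f ^ j * f ^ (l - 1 - j) = f ^ (l - 1) := by
        intro j hj
        have hj' := Finset.mem_range.mp hj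
        rw [← pow_add]
        congr 1
        omega
      rw [Finset.sum_congr rfl hterm, Finset.sum_const, Finset.card_range, nsmul_eq_mul,
        Polynomial.C_eq_natCast]
    rw [PhiH, ← hconst, ← Finset.sum_sub_distrib]
    apply Finset.dvd_sum
    intro j hj
    have : f ^ j * g ^ (l - 1 - j) - f ^ j * f ^ (l - 1 - j)
        = f ^ j * (g ^ (l - 1 - j) - f ^ (l - 1 - j)) := by ring
    rw [this]
    refine Dvd.dvd.mul_left ?_ _
    have hdd := dvd_neg.mpr (sub_dvd_pow_sub_pow f g (l - 1 - j))
    rwa [neg_sub] at hdd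
  have hcopPhi : IsCoprime (f - g) (PhiH l f g) := by
    obtain ⟨h1, hh1⟩ := hdvdPhi
    have hrw : PhiH l f g = C (l : F) * f ^ (l - 1) + (f - g) * h1 := by
      linear_combination (norm := ring_nf) hh1
    have hcl : IsCoprime (f - g) (C (l : F) * f ^ (l - 1)) := by
      apply IsCoprime.mul_right _ (hC1.pow_right)
      exact ⟨0, C ((l : F)⁻¹), by
        rw [zero_mul, zero_add, ← Polynomial.C_mul, inv_mul_cancel₀ hlF, Polynomial.C_1]⟩
    rw [hrw]
    exact hcl.add_mul_left_right h1
  -- Mason-Stothers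
  have hane : f ^ l ≠ 0 := pow_ne_zero _ hf0
  have hbne : -(g ^ l) ≠ 0 := neg_ne_zero.mpr (pow_ne_zero _ hg0)
  have hflgl : f ^ l - g ^ l ≠ 0 := by
    rw [← hgeom]; exact mul_ne_zero hPhine hfmg
  have hcne : g ^ l - f ^ l ≠ 0 := by
    intro h0; apply hflgl; linear_combination (norm := ring_nf) -h0
  have hab : IsCoprime (f ^ l) (-(g ^ l)) := (hfg.pow).neg_right
  have hbc : IsCoprime (-(g ^ l)) (g ^ l - f ^ l) := by
    have h' : g ^ l - f ^ l = -(f ^ l) + -(g ^ l) * (-1) := by ring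
    rw [h']
    exact ((hfg.symm.pow).neg_left.neg_right).add_mul_left_right (-1)
  have hca : IsCoprime (g ^ l - f ^ l) (f ^ l) := by
    apply IsCoprime.symm
    have h' : g ^ l - f ^ l = g ^ l + f ^ l * (-1) := by ring
    rw [h']
    exact (hfg.pow).add_mul_left_right (-1)
  have hsum : f ^ l + -(g ^ l) + (g ^ l - f ^ l) = 0 := by ring
  have habc := Polynomial.abc hane hbne hcne hab hsum
  have habc' : l * f.natDegree + 1 ≤
        (radical (f ^ l * -(g ^ l) * (g ^ l - f ^ l))).natDegree ∧
      l * g.natDegree + 1 ≤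
        (radical (f ^ l * -(g ^ l) * (g ^ l - f ^ l))).natDegree := by
    rcases habc with ⟨h1, h2, _⟩ | ⟨h1, h2, _⟩
    · constructor
      · rw [Polynomial.natDegree_pow] at h1; exact h1
      · rw [Polynomial.natDegree_neg, Polynomial.natDegree_pow] at h2; exact h2
    · exfalso
      rcases hder with hd | hd
      · apply hd
        rw [Polynomial.derivative_pow] at h1
        rcases mul_eq_zero.mp h1 with h3 | h3
        · exfalso
          exact (mul_ne_zero (Polynomial.C_ne_zero.mpr hlF) (pow_ne_zero _ hf0)) h3
        · exact h3
      · apply hd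
        rw [Polynomial.derivative_neg, neg_eq_zero, Polynomial.derivative_pow] at h2
        rcases mul_eq_zero.mp h2 with h3 | h3
        · exfalso
          exact (mul_ne_zero (Polynomial.C_ne_zero.mpr hlF) (pow_ne_zero _ hg0)) h3
        · exact h3
  -- bound the radical degree
  set D := (radical (f ^ l * -(g ^ l) * (g ^ l - f ^ l))).natDegree with hDdef
  have hMason : l * θ + 1 ≤ D := by
    rcases max_choice f.natDegree g.natDegree with hc | hc
    · rw [hθdef, hc]; exact habc'.1
    · rw [hθdef, hc]; exact habc'.2
  -- rewrite the product
  have hprodrw : f ^ l * -(g ^ l) * (g ^ l - f ^ l)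
      = f ^ l * (g ^ l * ((PhiH l f g) * (f - g))) := by
    rw [hgeom]; ring
  have hraddvd : radical (f ^ l * -(g ^ l) * (g ^ l - f ^ l)) ∣
      radical f * (radical g * (radical (PhiH l f g) * radical (f - g))) := by
    rw [hprodrw]
    calc radical (f ^ l * (g ^ l * ((PhiH l f g) * (f - g))))
        ∣ radical (f ^ l) * radical (g ^ l * ((PhiH l f g) * (f - g))) :=
          aux_radical_mul_dvd hane
            (mul_ne_zero (pow_ne_zero _ hg0) (mul_ne_zero hPhine hfmg))
      _ ∣ radical (f ^ l) * (radical (g ^ l) * radical ((PhiH l f g) * (f - g))) :=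
          mul_dvd_mul_left _ (aux_radical_mul_dvd (pow_ne_zero _ hg0)
            (mul_ne_zero hPhine hfmg))
      _ = radical f * (radical g * radical ((PhiH l f g) * (f - g))) := by
          rw [radical_pow f (by omega : l ≠ 0), radical_pow g (by omega : l ≠ 0)]
      _ ∣ radical f * (radical g * (radical (PhiH l f g) * radical (f - g))) :=
          mul_dvd_mul_left _ (mul_dvd_mul_left _ (aux_radical_mul_dvd hPhine hfmg))
  -- bound the radical of PhiH l f g
  have hradPhi : radical (PhiH l f g) ∣ radical Ψ * ∏ i, radical (Φ i) := by
    rw [heq]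
    have hu : IsUnit (C α) := Polynomial.isUnit_C.mpr hα.isUnit
    obtain ⟨u, hu'⟩ := hu
    rw [mul_assoc, ← hu', radical_mul_of_isUnit_left u.isUnit]
    calc radical (Ψ ^ l * ∏ i, (Φ i) ^ r i)
        ∣ radical (Ψ ^ l) * radical (∏ i, (Φ i) ^ r i) :=
          aux_radical_mul_dvd (pow_ne_zero _ hΨ)
            (Finset.prod_ne_zero_iff.mpr fun i _ => pow_ne_zero _ (hΦfacts i).1)
      _ = radical Ψ * radical (∏ i, (Φ i) ^ r i) := by
          rw [radical_pow Ψ (by omega : l ≠ 0)]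
      _ ∣ radical Ψ * ∏ i, radical ((Φ i) ^ r i) :=
          mul_dvd_mul_left _ (aux_radical_prod_dvd fun i _ => pow_ne_zero _ (hΦfacts i).1)
      _ = radical Ψ * ∏ i, radical (Φ i) := by
          congr 1
          exact Finset.prod_congr rfl fun i _ => radical_pow (Φ i) (by have := hr i; omega)
  -- degree bound for D
  have hradPsi_ne : radical Ψ * ∏ i, radical (Φ i) ≠ 0 :=
    mul_ne_zero (radical_ne_zero) (Finset.prod_ne_zero_iff.mpr fun i _ => radical_ne_zero)
  have hW_ne : radical f * (radical g * ((radical Ψ * ∏ i, radical (Φ i)) * radical (f - g))) ≠ 0 :=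
    mul_ne_zero (radical_ne_zero) (mul_ne_zero (radical_ne_zero)
      (mul_ne_zero hradPsi_ne (radical_ne_zero)))
  have hDW : D ≤ (radical f * (radical g *
      ((radical Ψ * ∏ i, radical (Φ i)) * radical (f - g)))).natDegree := by
    apply Polynomial.natDegree_le_of_dvd _ hW_ne
    calc radical (f ^ l * -(g ^ l) * (g ^ l - f ^ l))
        ∣ radical f * (radical g * (radical (PhiH l f g) * radical (f - g))) := hraddvd
      _ ∣ radical f * (radical g * ((radical Ψ * ∏ i, radical (Φ i)) * radical (f - g))) :=
          mul_dvd_mul_left _ (mul_dvd_mul_left _ (mul_dvd_mul_right hradPhi _))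
  -- numeric degree bounds of the radicals
  have hrad_le : ∀ p : Polynomial F, p ≠ 0 → (radical p).natDegree ≤ p.natDegree :=
    fun p hp => Polynomial.natDegree_le_of_dvd radical_dvd_self hp
  have hdegW : (radical f * (radical g *
      ((radical Ψ * ∏ i, radical (Φ i)) * radical (f - g)))).natDegree
      ≤ θ + (θ + ((dΨ + n * (l - 1)) + θ)) := by
    apply le_trans Polynomial.natDegree_mul_le
    apply Nat.add_le_add
    · exact le_trans (hrad_le f hf0) (le_max_left _ _)
    apply le_trans Polynomial.natDegree_mul_le
    apply Nat.add_le_add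
    · exact le_trans (hrad_le g hg0) (le_max_right _ _)
    apply le_trans Polynomial.natDegree_mul_le
    apply Nat.add_le_add
    · apply le_trans Polynomial.natDegree_mul_le
      apply Nat.add_le_add
      · exact hrad_le Ψ hΨ
      · calc (∏ i, radical (Φ i)).natDegree ≤ ∑ i, (radical (Φ i)).natDegree :=
              Polynomial.natDegree_prod_le _ _
          _ ≤ ∑ _i : Fin n, (l - 1) := Finset.sum_le_sum fun i _ =>
              le_trans (hrad_le (Φ i) (hΦfacts i).1) (le_of_eq (hΦfacts i).2)
          _ = n * (l - 1) := by simp [Finset.sum_const, mul_comm]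
    · exact le_trans (hrad_le (f - g) hfmg) (Polynomial.natDegree_sub_le f g)
  have hBig : l * θ + 1 ≤ 3 * θ + dΨ + n * (l - 1) := by
    have := le_trans hMason (le_trans hDW hdegW)
    omega
  -- final arithmetic over ℤ
  have h4l : 4 * l ≤ l ^ 2 := by nlinarith
  have hZ1 : (l : ℤ) * θ + 1 ≤ 3 * θ + dΨ + n * ((l : ℤ) - 1) := by
    have h := hBig
    zify [hl1] at h
    linarith
  have hZ2 : ((l : ℤ) - 1) * θ = l * dΨ + R * ((l : ℤ) - 1) := by
    have h := hE
    zify [hl1] at h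
    linarith
  have hZ6 : 2 * (n : ℤ) ≤ (l : ℤ) ^ 2 - 4 * l + 1 := by
    have h := hn
    zify [h4l] at h
    linarith
  have hZ5 : (5 : ℤ) ≤ l := by exact_mod_cast hl5
  have hZn : (1 : ℤ) ≤ n := by exact_mod_cast hn1
  have hZR : (n : ℤ) ≤ R := by exact_mod_cast hRn
  have hZθ : (1 : ℤ) ≤ θ := by exact_mod_cast hθ
  have hZΨ : (0 : ℤ) ≤ dΨ := Int.natCast_nonneg _
  have hLprime : Prime (l : ℤ) := Nat.prime_iff_prime_int.mp hl
  have hdvd : (l : ℤ) ∣ ((θ : ℤ) - R) := by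
    have h1 : (l : ℤ) ∣ ((l : ℤ) - 1) * ((θ : ℤ) - R) := ⟨dΨ, by linarith [hZ2, mul_comm ((l:ℤ)-1) ((θ:ℤ)-(R:ℤ))]⟩
    rcases hLprime.dvd_or_dvd h1 with h2 | h2
    · exfalso
      have := Int.le_of_dvd (by linarith) h2
      linarith
    · exact h2
  obtain ⟨k, hk⟩ := hdvd
  have hPk : (dΨ : ℤ) = ((l : ℤ) - 1) * k := by
    have hc : (l : ℤ) * ((( l : ℤ) - 1) * k) = (l : ℤ) * dΨ := by
      have : ((l : ℤ) - 1) * ((θ : ℤ) - R) = (l : ℤ) * dΨ := by linarith [hZ2]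
      calc (l : ℤ) * (((l : ℤ) - 1) * k) = ((l : ℤ) - 1) * ((l : ℤ) * k) := by ring
        _ = ((l : ℤ) - 1) * ((θ : ℤ) - R) := by rw [← hk]
        _ = (l : ℤ) * dΨ := this
    exact (mul_left_cancel₀ (Int.natCast_ne_zero.mpr (by omega)) hc).symm
  have hk0 : 0 ≤ k := by
    by_contra hneg
    push_neg at hneg
    have h1 : k ≤ -1 := by omega
    have h2 : ((l : ℤ) - 1) * k ≤ ((l : ℤ) - 1) * (-1) :=
      mul_le_mul_of_nonneg_left h1 (by linarith)
    linarith
  have hfinal : (θ : ℤ) ≤ 2 * n - 1 := by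
    by_contra hcon
    push_neg at hcon
    have hT2n : 2 * (n : ℤ) ≤ θ := by linarith
    rcases eq_or_lt_of_le hk0 with hk1 | hk1
    · -- k = 0 : θ = R
      have hTR : (θ : ℤ) = R := by
        have := hk; rw [← hk1] at this; linarith
      -- from hZ1 : R(l-3) + 1 ≤ n(l-1)
      nlinarith [hZ1, hZ2, mul_nonneg (by linarith : (0:ℤ) ≤ (n:ℤ) - 1)
        (by linarith : (0:ℤ) ≤ (l:ℤ) - 5), hTR, hPk]
    · -- k ≥ 1
      have hk1' : (1 : ℤ) ≤ k := hk1
      nlinarith [hZ1, hZ2, hk, hPk, hZ6,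
        mul_nonneg (by linarith : (0:ℤ) ≤ (R:ℤ) - n) (by linarith : (0:ℤ) ≤ (l:ℤ) - 3),
        mul_nonneg (by linarith : (0:ℤ) ≤ k - 1) (by nlinarith : (0:ℤ) ≤ (l:ℤ)^2 - 4*l + 1)]
  omega
end

section
/- Let l ≥ 5 be a prime and F a field of characteristic 0 such that the l-th cyclotomic polynomial Φ_l(X) is irreducible in F[x]. Let f, g ∈ F[x] be relatively prime, not both constant. If Φ_l(f,g) has a multiple root in an algebraic closure of F (i.e. Φ_l(f,g) is not squarefree), then l ≤ 2θ − 1, where θ := max(deg f, deg g). -/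
open Polynomial

theorem le_of_not_squarefree_PhiH {F : Type*} [Field F] [CharZero F]
    (l : ℕ) (hl : l.Prime) (hl5 : 5 ≤ l)
    (hirr : Irreducible (∑ i ∈ Finset.range l, (X : Polynomial F) ^ i))
    (f g : Polynomial F) (hfg : IsCoprime f g)
    (hconst : ¬ (f.natDegree = 0 ∧ g.natDegree = 0))
    (hsq : ¬ Squarefree (PhiH l f g)) :
    l ≤ 2 * max f.natDegree g.natDegree - 1 := by
  classical
  obtain ⟨k, rfl⟩ : ∃ k, l = k + 1 := ⟨l - 1, by omega⟩
  set l := k + 1 with hlk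
  set m := f.natDegree with hm
  set n := g.natDegree with hn
  -- θ ≥ 1
  have hθ : 1 ≤ max m n := by
    by_contra h
    push_neg at h
    exact hconst ⟨by omega, by omega⟩
  set P := PhiH l f g with hPdef
  have hP1 : P * (f - g) = f ^ l - g ^ l := geom_sum₂_mul f g l
  -- P ≠ 0
  have hP0 : P ≠ 0 := by
    intro h
    rw [h, zero_mul] at hP1
    have hfl : f ^ l = g ^ l := sub_eq_zero.mp hP1.symm
    have hfu : IsUnit f := (hfg.pow_right (n := l)).isUnit_of_dvd' dvd_rfl (hfl ▸ dvd_pow_self f (by omega))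
    have hgu : IsUnit g := (hfg.symm.pow_right (n := l)).isUnit_of_dvd' dvd_rfl (hfl ▸ dvd_pow_self g (by omega))
    exact hconst ⟨natDegree_eq_zero_of_isUnit hfu, natDegree_eq_zero_of_isUnit hgu⟩
  -- get irreducible q with q^2 ∣ P
  rw [Squarefree] at hsq
  push_neg at hsq
  obtain ⟨x, hxx, hxu⟩ := hsq
  have hx0 : x ≠ 0 := by rintro rfl; exact hP0 (zero_dvd_iff.mp (by simpa using hxx))
  obtain ⟨q, hq, hqx⟩ := WfDvdMonoid.exists_irreducible_factor hxu hx0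
  have hqqP : q * q ∣ P := (mul_dvd_mul hqx hqx).trans hxx
  have hqP : q ∣ P := (dvd_mul_right q q).trans hqqP
  have hqP' : q ∣ derivative P := by
    obtain ⟨r, hr⟩ := hqqP
    rw [hr, derivative_mul, derivative_mul]
    exact dvd_add ((dvd_add (dvd_mul_left q _) (dvd_mul_right q _)).mul_right r)
      ((dvd_mul_right q q).mul_right _)
  haveI := Fact.mk hq
  set K := AdjoinRoot q with hK
  haveI : CharZero K := charZero_of_injective_algebraMap (algebraMap F K).injective
  set φ := AdjoinRoot.mk q with hφ
  set a := φ f with ha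
  set b := φ g with hb
  set fa := φ (derivative f) with hfa
  set gb := φ (derivative g) with hgb
  have hPa : φ P = 0 := AdjoinRoot.mk_eq_zero.mpr hqP
  have hP'a : φ (derivative P) = 0 := AdjoinRoot.mk_eq_zero.mpr hqP'
  -- a^l = b^l
  have habl : a ^ l = b ^ l := by
    have := congrArg φ hP1
    rw [map_mul, hPa, zero_mul, map_sub, map_pow, map_pow] at this
    exact sub_eq_zero.mp this.symm
  -- a ≠ 0, b ≠ 0
  obtain ⟨u, v, huv⟩ := id hfg
  have hone : φ u * a + φ v * b = 1 := by
    rw [ha, hb, ← map_mul, ← map_mul, ← map_add, huv, map_one]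
  have hab00 : ¬(a = 0 ∧ b = 0) := by
    rintro ⟨h1, h2⟩
    rw [h1, h2, mul_zero, mul_zero, add_zero] at hone
    exact zero_ne_one hone
  have ha0 : a ≠ 0 := by
    intro h
    have : b ^ l = 0 := by rw [← habl, h, zero_pow (by omega)]
    exact hab00 ⟨h, pow_eq_zero_iff (by omega) |>.mp this⟩
  have hb0 : b ≠ 0 := by
    intro h
    have : a ^ l = 0 := by rw [habl, h, zero_pow (by omega)]
    exact hab00 ⟨pow_eq_zero_iff (by omega) |>.mp this, h⟩
  -- derivative identity
  have hD : a ^ k * fa = b ^ k * gb := by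
    have hD0 : derivative (P * (f - g))
        = C (l : F) * f ^ k * derivative f - C (l : F) * g ^ k * derivative g := by
      rw [hP1, derivative_sub, derivative_pow, derivative_pow]
      norm_num [hlk]
    have := congrArg φ hD0
    rw [derivative_mul, map_add, map_mul, map_mul, hPa, hP'a, zero_mul, zero_mul, add_zero, map_sub,
      map_mul, map_mul, map_mul, map_mul, map_pow, map_pow] at this
    have hC : φ (C (l : F)) = (l : K) := by
      rw [map_natCast (C : F →+* F[X]) l, map_natCast φ l]
    rw [hC] at this
    have hl0 : (l : K) ≠ 0 := Nat.cast_ne_zero.mpr (by omega)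
    have h5 : (l : K) * (a ^ k * fa - b ^ k * gb) = 0 := by linear_combination -this
    exact sub_eq_zero.mp ((mul_eq_zero.mp h5).resolve_left hl0)
  -- Wronskian maps to zero
  have hWq : φ (f * derivative g - g * derivative f) = 0 := by
    have key : a ^ k * (a * gb - b * fa) = 0 := by
      have hl' : a ^ l = a ^ k * a := by rw [hlk, pow_succ]
      have hl'' : b ^ l = b ^ k * b := by rw [hlk, pow_succ]
      rw [hl', hl''] at habl
      linear_combination gb * habl - b * hD
    have h2 : a * gb - b * fa = 0 := by
      rcases mul_eq_zero.mp key with h | h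
      · exact absurd h (pow_ne_zero k ha0)
      · exact h
    rw [map_sub, map_mul, map_mul, ← ha, ← hb, ← hfa, ← hgb]
    linear_combination h2
  have hqW : q ∣ f * derivative g - g * derivative f := AdjoinRoot.mk_eq_zero.mp hWq
  set W := f * derivative g - g * derivative f with hW
  -- W ≠ 0
  have hWne : W ≠ 0 := by
    intro h
    have hWeq : f * derivative g = g * derivative f := sub_eq_zero.mp h
    have hfd : f ∣ derivative f :=
      hfg.dvd_of_dvd_mul_left (by rw [← hWeq]; exact dvd_mul_right f _)
    have hgd : g ∣ derivative g :=
      hfg.symm.dvd_of_dvd_mul_left (by rw [hWeq]; exact dvd_mul_right g _)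
    have hfn : m = 0 := by
      by_contra hnf
      by_cases hdf : derivative f = 0
      · exact hnf (natDegree_eq_zero_of_derivative_eq_zero hdf)
      · have h1 := natDegree_derivative_lt (p := f) hnf
        have h2 := natDegree_le_of_dvd hfd hdf
        omega
    have hgn : n = 0 := by
      by_contra hng
      by_cases hdg : derivative g = 0
      · exact hng (natDegree_eq_zero_of_derivative_eq_zero hdg)
      · have h1 := natDegree_derivative_lt (p := g) hng
        have h2 := natDegree_le_of_dvd hgd hdg
        omega
    exact hconst ⟨hfn, hgn⟩
  have hqWdeg : q.natDegree ≤ W.natDegree := natDegree_le_of_dvd hqW hWne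
  -- degree bound on W
  have hWdeg : W.natDegree ≤ 2 * max m n - 2 := by
    have hWlt : W.natDegree < m + n := by
      have : W = wronskian f g := by rw [hW, wronskian]; ring
      rw [this] at hWne ⊢
      exact natDegree_wronskian_lt_add hWne
    by_cases hmn : m = n
    · -- leading terms cancel
      have hm1 : 1 ≤ m := by omega
      have hcoeff : W.coeff (2 * m - 1) = 0 := by
        have e1 : (f * derivative g).coeff (m + (m - 1)) =
            f.coeff m * (derivative g).coeff (m - 1) :=
          coeff_mul_add_eq_of_natDegree_le hm.ge
            (by have h := natDegree_derivative_le g; omega)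
        have e2 : (g * derivative f).coeff (m + (m - 1)) =
            g.coeff m * (derivative f).coeff (m - 1) :=
          coeff_mul_add_eq_of_natDegree_le (by omega)
            (by have h := natDegree_derivative_le f; omega)
        have e3 : 2 * m - 1 = m + (m - 1) := by omega
        have e4 : m - 1 + 1 = m := by omega
        rw [hW, coeff_sub, e3, e1, e2, coeff_derivative, coeff_derivative, e4]
        ring
      have hne' : W.natDegree ≠ 2 * m - 1 := by
        intro h
        apply hWne
        rw [← leadingCoeff_eq_zero, leadingCoeff, h]
        exact hcoeff
      omega
    · omega
  -- lower bound l - 1 ≤ deg q via minpoly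
  set Φ := ∑ i ∈ Finset.range l, (X : Polynomial F) ^ i with hΦ
  have hmonic : Φ.Monic := monic_geom_sum_X (by omega)
  have hΦdeg : Φ.natDegree = k := by
    have h1 : Φ * (X - 1) = X ^ l - 1 := geom_sum_mul X l
    have h2 : (X - 1 : Polynomial F) = X - C 1 := by rw [map_one]
    have h3 : (X ^ l - 1 : Polynomial F) = X ^ l - C 1 := by rw [map_one]
    have := congrArg natDegree h1
    rw [natDegree_mul hmonic.ne_zero (by rw [h2]; exact X_sub_C_ne_zero 1), h2,
      natDegree_X_sub_C, h3, natDegree_X_pow_sub_C] at this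
    omega
  set ζ : K := a * b⁻¹ with hζdef
  have hζ : (Polynomial.aeval ζ) Φ = 0 := by
    have hsum : (∑ i ∈ Finset.range l, ζ ^ i) * b ^ k = 0 := by
      rw [Finset.sum_mul]
      have : ∀ i ∈ Finset.range l, ζ ^ i * b ^ k = a ^ i * b ^ (l - 1 - i) := by
        intro i hi
        rw [Finset.mem_range] at hi
        have hik : k = i + (l - 1 - i) := by omega
        rw [hζdef, mul_pow, inv_pow, hik, pow_add, mul_assoc,
          inv_mul_cancel_left₀ (pow_ne_zero i hb0)]
      rw [Finset.sum_congr rfl this]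
      have : φ P = ∑ i ∈ Finset.range l, a ^ i * b ^ (l - 1 - i) := by
        rw [hPdef, PhiH, map_sum]
        exact Finset.sum_congr rfl fun i _ => by rw [map_mul, map_pow, map_pow]
      rw [← this, hPa]
    have hbk : (b : K) ^ k ≠ 0 := pow_ne_zero k hb0
    have hs0 : (∑ i ∈ Finset.range l, ζ ^ i) = 0 := by
      rcases mul_eq_zero.mp hsum with h | h
      · exact h
      · exact absurd h hbk
    rw [hΦ, map_sum]
    simpa using hs0
  have hminp : minpoly F ζ = Φ := (minpoly.eq_of_irreducible_of_monic hirr hζ hmonic).symm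
  haveI : Module.Finite F K := (AdjoinRoot.powerBasis hq.ne_zero).finite
  have hfr : Module.finrank F K = q.natDegree := by
    rw [(AdjoinRoot.powerBasis hq.ne_zero).finrank]
    rfl
  have hminle : (minpoly F ζ).natDegree ≤ Module.finrank F K := minpoly.natDegree_le ζ
  rw [hminp, hΦdeg, hfr] at hminle
  omega
end

section
/- The only integer solutions (x,y) ∈ ℤ × ℤ of the diophantine equation x⁴ + x³y + x²(y²−1) + xy(y²−1) + (y²−1)² = 0 are (0,1), (−1,1), (0,−1) and (1,−1). -/
theorem diophantine_quartic_solutions (x y : ℤ) :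
    x ^ 4 + x ^ 3 * y + x ^ 2 * (y ^ 2 - 1) + x * y * (y ^ 2 - 1) + (y ^ 2 - 1) ^ 2 = 0 ↔
      (x = 0 ∧ y = 1) ∨ (x = -1 ∧ y = 1) ∨ (x = 0 ∧ y = -1) ∨ (x = 1 ∧ y = -1) := by
  constructor
  · intro h
    have hA : (2*x^2 + x*y + 2*y^2 - 2)^2 = x^2 * (5*y^2 - 4) := by linear_combination 4*h
    by_cases hx : x = 0
    · subst hx
      have hy : (y - 1) * (y + 1) = 0 := by nlinarith [sq_nonneg (y^2-1)]
      rcases mul_eq_zero.mp hy with h1 | h1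
      · exact Or.inl ⟨rfl, by linarith⟩
      · exact Or.inr (Or.inr (Or.inl ⟨rfl, by linarith⟩))
    · have hdvd : x ∣ (2*x^2 + x*y + 2*y^2 - 2) := by
        rw [← Int.pow_dvd_pow_iff (two_ne_zero), hA]
        exact ⟨5*y^2 - 4, rfl⟩
      obtain ⟨t, ht⟩ := hdvd
      have ht2 : t^2 = 5*y^2 - 4 := by
        have hx2 : (x:ℤ)^2 ≠ 0 := pow_ne_zero 2 hx
        have : x^2 * t^2 = x^2 * (5*y^2 - 4) := by
          rw [← hA, ht]; ring
        exact mul_left_cancel₀ hx2 this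
      have hsq : (4*x + y - t)^2 = 12 - 10*y^2 - 2*y*t := by
        linear_combination 8*ht + ht2
      have hy2 : y^2 ≤ 1 := by
        nlinarith [sq_nonneg (4*x + y - t), sq_nonneg (2*t + 5*y)]
      have hy1 : -1 ≤ y := by nlinarith
      have hy1' : y ≤ 1 := by nlinarith
      interval_cases y
      · -- y = -1
        have hx3 : x^3 * (x - 1) = 0 := by linear_combination h
        rcases mul_eq_zero.mp hx3 with h1 | h1
        · exact absurd (pow_eq_zero_iff (three_ne_zero) |>.mp h1) hx
        · exact Or.inr (Or.inr (Or.inr ⟨by linarith, rfl⟩))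
      · -- y = 0
        exfalso; nlinarith [sq_nonneg t]
      · -- y = 1
        have hx3 : x^3 * (x + 1) = 0 := by linear_combination h
        rcases mul_eq_zero.mp hx3 with h1 | h1
        · exact absurd (pow_eq_zero_iff (three_ne_zero) |>.mp h1) hx
        · exact Or.inr (Or.inl ⟨by linarith, rfl⟩)
  · rintro (⟨hx, hy⟩ | ⟨hx, hy⟩ | ⟨hx, hy⟩ | ⟨hx, hy⟩) <;> subst hx <;> subst hy <;> norm_num
end

section
/- Let p be a prime, F a field, and α ∈ F an element satisfying α^p + α + 1 = 0 and α³ ≠ 1. Then Φ_p(α) = Φ_p(α³), where Φ_p(X) = Σ_{i=0}^{p−1} X^i is the p-th cyclotomic polynomial. -/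
theorem phi_p_eq_phi_p_cube {F : Type*} [Field F] (p : ℕ) (hp : p.Prime) (α : F)
    (hroot : α ^ p + α + 1 = 0) (hcube : α ^ 3 ≠ 1) :
    ∑ i ∈ Finset.range p, α ^ i = ∑ i ∈ Finset.range p, (α ^ 3) ^ i := by
  have h1 : α ≠ 1 := by
    rintro rfl; exact hcube (one_pow 3)
  have hap : α ^ p = -α - 1 := by linear_combination hroot
  rw [geom_sum_eq h1, geom_sum_eq hcube,
    div_eq_div_iff (sub_ne_zero.mpr h1) (sub_ne_zero.mpr hcube),
    ← pow_mul, mul_comm 3 p, pow_mul, hap]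
  ring
end

section
/- For every integer n ≥ 1 and every prime p, the polynomial Xⁿ + X^{n−1} + p is irreducible in ℚ[X]. -/
open Polynomial

private lemma multiset_one_lt_prod (s : Multiset ℝ) (h : ∀ x ∈ s, 1 < x) (hs : s ≠ 0) :
    1 < s.prod := by
  have key : ∀ (s : Multiset ℝ), (∀ x ∈ s, 1 < x) → 1 ≤ s.prod := by
    intro s
    induction s using Multiset.induction_on with
    | empty => simp
    | cons a t ih =>
      intro h
      rw [Multiset.prod_cons]
      have ha : 1 < a := h a (Multiset.mem_cons_self a t)
      have ht : 1 ≤ t.prod := ih fun x hx => h x (Multiset.mem_cons_of_mem hx)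
      nlinarith
  obtain ⟨a, ha⟩ := Multiset.exists_mem_of_ne_zero hs
  obtain ⟨t, rfl⟩ := Multiset.exists_cons_of_mem ha
  rw [Multiset.prod_cons]
  have ha : 1 < a := h a (Multiset.mem_cons_self a t)
  have ht : 1 ≤ t.prod := key t fun x hx => h x (Multiset.mem_cons_of_mem hx)
  nlinarith

private lemma root_abs_gt_one (n : ℕ) (hn : 1 ≤ n) (p : ℕ) (hp : p.Prime) (z : ℂ)
    (hz : z ^ n + z ^ (n - 1) + (p : ℂ) = 0) : 1 < ‖z‖ := by
  by_contra hle
  push_neg at hle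
  have hn' : n = (n - 1) + 1 := (Nat.succ_pred_eq_of_pos hn).symm
  have hfac : z ^ (n - 1) * (z + 1) = -(p : ℂ) := by
    rw [mul_add, mul_one, ← pow_succ, ← hn']
    linear_combination hz
  have habs : (p : ℝ) = ‖z‖ ^ (n - 1) * ‖z + 1‖ := by
    have := congrArg (‖·‖) hfac
    rwa [norm_mul, norm_pow, norm_neg, Complex.norm_natCast, eq_comm] at this
  have hA : ‖z‖ ^ (n - 1) ≤ 1 := pow_le_one₀ (norm_nonneg z) hle
  have hA0 : 0 ≤ ‖z‖ ^ (n - 1) := pow_nonneg (norm_nonneg z) _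
  have hB : ‖z + 1‖ ≤ 2 := by
    calc ‖z + 1‖ ≤ ‖z‖ + ‖(1:ℂ)‖ := norm_add_le z 1
    _ ≤ 2 := by rw [norm_one]; linarith
  have hB0 : 0 ≤ ‖z + 1‖ := norm_nonneg _
  have hp2 : 2 ≤ (p : ℝ) := by exact_mod_cast hp.two_le
  -- p = 2 and equality everywhere
  have hBeq : ‖z + 1‖ = 2 := by nlinarith
  -- equality case forces z = 1
  have hnsq : Complex.normSq (z + 1) = 4 := by
    rw [← Complex.sq_norm, hBeq]; norm_num
  have hzsq : Complex.normSq z ≤ 1 := by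
    rw [← Complex.sq_norm]; nlinarith [norm_nonneg z]
  have hre : z.re ≤ 1 := le_trans (Complex.re_le_norm z) hle
  have hns1 : Complex.normSq (z + 1) = Complex.normSq z + 2 * z.re + 1 := by
    simp [Complex.normSq_apply, Complex.add_re, Complex.add_im]
    ring
  have hre1 : z.re = 1 := by
    rw [hns1] at hnsq
    nlinarith
  have him : z.im = 0 := by
    have h1 : Complex.normSq z = z.re ^ 2 + z.im ^ 2 := by
      simp [Complex.normSq_apply]; ring
    nlinarith [sq_nonneg z.im]
  have hz1 : z = 1 := Complex.ext (by simp [hre1]) (by simp [him])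
  rw [hz1, one_pow, one_pow] at hz
  have : (p : ℂ) = -2 := by linear_combination hz
  have : (p : ℝ) = -2 := by exact_mod_cast congrArg Complex.re this
  linarith

private lemma factor_isUnit (n : ℕ) (hn : 1 ≤ n) (p : ℕ) (hp : p.Prime) (g : ℤ[X])
    (hlc : IsUnit g.leadingCoeff)
    (hdvd : g ∣ (X ^ n + X ^ (n - 1) + C (p : ℤ)))
    (h0 : (g.coeff 0).natAbs = 1) : IsUnit g := by
  have hg0 : g ≠ 0 := by
    intro h; rw [h] at h0; simp at h0
  set gC : ℂ[X] := g.map (Int.castRingHom ℂ) with hgC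
  have hinj : Function.Injective (Int.castRingHom ℂ) := Int.cast_injective
  have hgC0 : gC ≠ 0 := by
    simpa [hgC, Polynomial.map_eq_zero_iff hinj] using hg0
  have hsplit : Splits gC := IsAlgClosed.splits gC
  have hcard : gC.roots.card = gC.natDegree := (splits_iff_card_roots).mp hsplit
  -- all roots have abs > 1
  have hroots : ∀ z ∈ gC.roots, 1 < ‖z‖ := by
    intro z hz
    have hzroot : gC.eval z = 0 := by
      have := Polynomial.isRoot_of_mem_roots hz
      exact this
    have hfdvd : gC ∣ (X ^ n + X ^ (n - 1) + C (p : ℤ)).map (Int.castRingHom ℂ) :=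
      Polynomial.map_dvd _ hdvd
    have hfz : ((X ^ n + X ^ (n - 1) + C (p : ℤ)).map (Int.castRingHom ℂ)).eval z = 0 := by
      obtain ⟨q, hq⟩ := hfdvd
      rw [hq, eval_mul, hzroot, zero_mul]
    have : z ^ n + z ^ (n - 1) + (p : ℂ) = 0 := by
      simpa [Polynomial.eval_map, Polynomial.eval₂_add, Polynomial.eval₂_pow] using hfz
    exact root_abs_gt_one n hn p hp z this
  -- |eval 0| = product of |roots|
  have heq := hsplit.eq_prod_roots
  have heval0 : ‖gC.eval 0‖ = ‖gC.leadingCoeff‖ *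
      (gC.roots.map (‖·‖)).prod := by
    conv_lhs => rw [heq]
    rw [eval_mul, eval_C, norm_mul]
    congr 1
    rw [eval_multiset_prod, Multiset.map_map, ← normHom_apply, map_multiset_prod, Multiset.map_map]
    congr 1
    refine Multiset.map_congr rfl fun z hz => ?_
    simp
  -- leading coefficient of gC has abs 1
  have hlcC : gC.leadingCoeff = (g.leadingCoeff : ℂ) :=
    leadingCoeff_map_of_leadingCoeff_ne_zero _ (by
      simpa using leadingCoeff_ne_zero.mpr hg0)
  have hlcabs : ‖gC.leadingCoeff‖ = 1 := by
    rcases Int.isUnit_iff.mp hlc with h | h <;> rw [hlcC, h] <;> simp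
  have heval0' : ‖gC.eval 0‖ = 1 := by
    have h1 : gC.eval 0 = ((g.coeff 0 : ℤ) : ℂ) := by
      rw [← coeff_zero_eq_eval_zero, hgC, coeff_map]; rfl
    rcases Int.natAbs_eq_iff.mp h0 with h | h <;> rw [h1, h] <;> simp
  have hprod1 : (gC.roots.map (‖·‖)).prod = 1 := by
    rw [heval0', hlcabs, one_mul] at heval0
    exact heval0.symm
  have hroots0 : gC.roots = 0 := by
    by_contra hne
    have hmapne : gC.roots.map (‖·‖) ≠ 0 := by
      simpa [Multiset.map_eq_zero] using hne
    have : 1 < (gC.roots.map (‖·‖)).prod := by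
      apply multiset_one_lt_prod _ _ hmapne
      intro x hx
      obtain ⟨z, hz, rfl⟩ := Multiset.mem_map.mp hx
      exact hroots z hz
    rw [hprod1] at this
    exact lt_irrefl 1 this
  have hdeg : g.natDegree = 0 := by
    have := hcard
    rw [hroots0] at this
    simp only [Multiset.card_zero] at this
    rw [← natDegree_map_eq_of_injective hinj g, ← hgC, ← this]
  have hgeq : g = C (g.coeff 0) := eq_C_of_natDegree_eq_zero hdeg
  rw [hgeq]
  apply isUnit_C.mpr
  rcases Int.natAbs_eq_iff.mp h0 with h | h <;> rw [h] <;> simp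

theorem irreducible_X_pow_add_X_pow_add_prime (n : ℕ) (hn : 1 ≤ n) (p : ℕ) (hp : p.Prime) :
    Irreducible ((X : Polynomial ℚ) ^ n + X ^ (n - 1) + C (p : ℚ)) := by
  rcases eq_or_lt_of_le hn with h1 | h2
  · -- n = 1 : degree one polynomial
    subst h1
    apply irreducible_of_degree_eq_one
    simp only [pow_one, Nat.sub_self, pow_zero]
    compute_degree!
  · have hn2 : 2 ≤ n := h2
    set f : ℤ[X] := X ^ n + X ^ (n - 1) + C (p : ℤ) with hf
    have hdlt : (X ^ (n - 1) + C (p : ℤ)).degree < (n : WithBot ℕ) := by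
      apply lt_of_le_of_lt (degree_add_le _ _)
      apply max_lt
      · rw [degree_X_pow]
        exact_mod_cast Nat.sub_lt (by omega) one_pos
      · exact lt_of_le_of_lt degree_C_le (by exact_mod_cast (show (0:ℕ) < n by omega))
    have hmonic : f.Monic := by
      rw [hf, add_assoc]
      exact monic_X_pow_add hdlt
    have hdegf : f.degree = n := by
      rw [hf, add_assoc, degree_add_eq_left_of_degree_lt (by rwa [degree_X_pow]),
        degree_X_pow]
    have hf0 : f.coeff 0 = (p : ℤ) := by
      rw [hf]
      simp only [coeff_add, coeff_X_pow, coeff_C, if_pos rfl]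
      rw [if_neg (by omega : ¬ (0:ℕ) = n), if_neg (by omega : ¬ (0:ℕ) = n - 1)]
      simp
    have hirr : Irreducible f := by
      constructor
      · apply not_isUnit_of_degree_pos
        rw [hdegf]
        exact_mod_cast (show (0:ℕ) < n by omega)
      · intro a b hab
        have hlc : a.leadingCoeff * b.leadingCoeff = 1 := by
          have hm := hmonic
          rw [Monic, hab, leadingCoeff_mul] at hm
          exact hm
        have hlca : IsUnit a.leadingCoeff := IsUnit.of_mul_eq_one _ hlc
        have hlcb : IsUnit b.leadingCoeff :=
          IsUnit.of_mul_eq_one _ (by rw [mul_comm] at hlc; exact hlc)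
        have hc0 : a.coeff 0 * b.coeff 0 = (p : ℤ) := by
          rw [← mul_coeff_zero, ← hab, hf0]
        have hnat : (a.coeff 0).natAbs * (b.coeff 0).natAbs = p := by
          rw [← Int.natAbs_mul, hc0, Int.natAbs_natCast]
        rcases hp.eq_one_or_self_of_dvd _ ⟨_, hnat.symm⟩ with h | h
        · exact Or.inl (factor_isUnit n hn p hp a hlca ⟨b, hf ▸ hab⟩ h)
        · have hb1 : (b.coeff 0).natAbs = 1 := by
            have h' := hnat
            rw [h] at h'
            exact Nat.eq_of_mul_eq_mul_left hp.pos (by rw [mul_one, h'])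
          exact Or.inr (factor_isUnit n hn p hp b hlcb ⟨a, by rw [← hf, hab, mul_comm]⟩ hb1)
    have hres := (IsPrimitive.Int.irreducible_iff_irreducible_map_cast
      hmonic.isPrimitive).mp hirr
    have hmap : f.map (Int.castRingHom ℚ) = X ^ n + X ^ (n - 1) + C (p : ℚ) := by
      simp [hf, Polynomial.map_add, Polynomial.map_pow, Polynomial.map_X, Polynomial.map_C]
    rwa [hmap] at hres
end
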